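/- arXiv:2002.11199 — 13 statements merged into one kernel-verified Lean document; each statement's English description precedes it below -/
import Mathlib

section
/- Let (X,f) be a dynamical system on a compact metric space. If f has shadowing, then f has two-sided shadowing: for every ε>0 there exists δ>0 such that every two-sided δ-pseudo-orbit (x_i)_{i∈ℤ} is ε-shadowed by some two-sided orbit (z_i)_{i∈ℤ} of a point z_0∈X. -/
open Filter Topology Function

variable {X : Type*} [MetricSpace X]

/-- A (forward) `δ`-pseudo-orbit. -/
def PseudoOrbit (f : X → X) (δ : ℝ) (x : ℕ → X) : Prop :=
  ∀ i, dist (f (x i)) (x (i + 1)) < δ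

/-- The orbit of `z` `ε`-shadows the sequence `x`. -/
def ShadowsFrom (f : X → X) (ε : ℝ) (z : X) (x : ℕ → X) : Prop :=
  ∀ i, dist (f^[i] z) (x i) < ε

/-- Classical shadowing. -/
def HasShadowing (f : X → X) : Prop :=
  ∀ ε > 0, ∃ δ > 0, ∀ x : ℕ → X, PseudoOrbit f δ x → ∃ z, ShadowsFrom f ε z x

/-- A full (two-sided) orbit. -/
def FullOrbit (f : X → X) (z : ℤ → X) : Prop := ∀ i : ℤ, f (z i) = z (i + 1)

/-- A two-sided `δ`-pseudo-orbit. -/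
def TwoSidedPseudoOrbit (f : X → X) (δ : ℝ) (x : ℤ → X) : Prop :=
  ∀ i : ℤ, dist (f (x i)) (x (i + 1)) < δ

/-- Two-sided shadowing. -/
def HasTwoSidedShadowing (f : X → X) : Prop :=
  ∀ ε > 0, ∃ δ > 0, ∀ x : ℤ → X, TwoSidedPseudoOrbit f δ x →
    ∃ z : ℤ → X, FullOrbit f z ∧ ∀ i, dist (z i) (x i) < ε

/-- A backwards `δ`-pseudo-orbit (indexed by nonpositive integers). -/
def BackwardPseudoOrbit (f : X → X) (δ : ℝ) (x : ℤ → X) : Prop :=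
  ∀ i < (0 : ℤ), dist (f (x i)) (x (i + 1)) < δ

/-- A backwards orbit. -/
def BackwardOrbit (f : X → X) (z : ℤ → X) : Prop := ∀ i < (0 : ℤ), f (z i) = z (i + 1)

/-- Backwards shadowing. -/
def HasBackwardShadowing (f : X → X) : Prop :=
  ∀ ε > 0, ∃ δ > 0, ∀ x : ℤ → X, BackwardPseudoOrbit f δ x →
    ∃ z : ℤ → X, BackwardOrbit f z ∧ ∀ i ≤ (0 : ℤ), dist (z i) (x i) < ε

/-- An asymptotic pseudo-orbit. -/
def AsymptoticPseudoOrbit (f : X → X) (x : ℕ → X) : Prop :=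
  Tendsto (fun i => dist (f (x i)) (x (i + 1))) atTop (nhds 0)

/-- s-limit shadowing. -/
def HasSLimitShadowing (f : X → X) : Prop :=
  HasShadowing f ∧ ∀ ε > 0, ∃ δ > 0, ∀ x : ℕ → X,
    PseudoOrbit f δ x → AsymptoticPseudoOrbit f x →
    ∃ z, ShadowsFrom f ε z x ∧ Tendsto (fun i => dist (f^[i] z) (x i)) atTop (nhds 0)

/-- Two-sided asymptotic pseudo-orbit condition. -/
def TwoSidedAsymptotic (f : X → X) (x : ℤ → X) : Prop :=
  Tendsto (fun i => dist (f (x i)) (x (i + 1))) atTop (nhds 0) ∧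
  Tendsto (fun i => dist (f (x i)) (x (i + 1))) atBot (nhds 0)

/-- The L-shadowing condition: two-sided asymptotic pseudo-orbits are
asymptotically shadowed by full orbits. -/
def HasLShadowing (f : X → X) : Prop :=
  ∀ ε > 0, ∃ δ > 0, ∀ x : ℤ → X,
    TwoSidedPseudoOrbit f δ x → TwoSidedAsymptotic f x →
    ∃ z : ℤ → X, FullOrbit f z ∧ (∀ i, dist (z i) (x i) < ε) ∧
      Tendsto (fun i => dist (z i) (x i)) atTop (nhds 0) ∧
      Tendsto (fun i => dist (z i) (x i)) atBot (nhds 0)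

/-- Two-sided s-limit shadowing. -/
def HasTwoSidedSLimitShadowing (f : X → X) : Prop :=
  HasTwoSidedShadowing f ∧ HasLShadowing f

/-- Backwards asymptotic pseudo-orbit condition. -/
def BackwardAsymptotic (f : X → X) (x : ℤ → X) : Prop :=
  Tendsto (fun i => dist (f (x i)) (x (i + 1))) atBot (nhds 0)

/-- Backwards s-limit shadowing. -/
def HasBackwardSLimitShadowing (f : X → X) : Prop :=
  HasBackwardShadowing f ∧ ∀ ε > 0, ∃ δ > 0, ∀ x : ℤ → X,
    BackwardPseudoOrbit f δ x → BackwardAsymptotic f x →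
    ∃ z : ℤ → X, BackwardOrbit f z ∧ (∀ i ≤ (0 : ℤ), dist (z i) (x i) < ε) ∧
      Tendsto (fun i => dist (z i) (x i)) atBot (nhds 0)

/-- A set has at most `n` points. -/
def AtMostCard (S : Set X) (n : ℕ) : Prop := ∃ F : Finset X, F.card ≤ n ∧ S ⊆ ↑F

/-- Positively `n`-expansive. -/
def PosNExpansive (f : X → X) (n : ℕ) : Prop :=
  ∃ r > 0, ∀ x : X, AtMostCard {y | ∀ k : ℕ, dist (f^[k] x) (f^[k] y) < r} n

/-- `n`-expansive (two-sided). -/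
def NExpansive (f : X → X) (n : ℕ) : Prop :=
  ∃ r > 0, ∀ x : ℤ → X, FullOrbit f x →
    AtMostCard {y0 | ∃ y : ℤ → X, FullOrbit f y ∧ y 0 = y0 ∧ ∀ i, dist (x i) (y i) < r} n

/-- `n`-shadowing. -/
def HasNShadowing (f : X → X) (n : ℕ) : Prop :=
  ∃ η > 0, ∀ ε, 0 < ε → ε < η → ∃ δ > 0, ∀ x : ℕ → X, PseudoOrbit f δ x →
    (∃ z, ShadowsFrom f ε z x) ∧ AtMostCard {z | ShadowsFrom f ε z x} n

/-- Two-sided `n`-shadowing. -/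
def HasTwoSidedNShadowing (f : X → X) (n : ℕ) : Prop :=
  ∃ η > 0, ∀ ε, 0 < ε → ε < η → ∃ δ > 0, ∀ x : ℤ → X, TwoSidedPseudoOrbit f δ x →
    (∃ z : ℤ → X, FullOrbit f z ∧ ∀ i, dist (z i) (x i) < ε) ∧
    AtMostCard {z0 | ∃ z : ℤ → X, FullOrbit f z ∧ z 0 = z0 ∧ ∀ i, dist (z i) (x i) < ε} n

/-- h-shadowing. -/
def HasHShadowing (f : X → X) : Prop :=
  ∀ ε > 0, ∃ δ > 0, ∀ (m : ℕ) (x : ℕ → X),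
    (∀ i < m, dist (f (x i)) (x (i + 1)) < δ) →
    ∃ z, (∀ i ≤ m, dist (f^[i] z) (x i) < ε) ∧ f^[m] z = x m

/-- Unique shadowing (`1`-shadowing). -/
def HasUniqueShadowing (f : X → X) : Prop :=
  ∃ η > 0, ∀ ε, 0 < ε → ε < η → ∃ δ > 0, ∀ x : ℕ → X, PseudoOrbit f δ x →
    ∃! z, ShadowsFrom f ε z x

/-- Unique s-limit shadowing. -/
def HasUniqueSLimitShadowing (f : X → X) : Prop :=
  HasUniqueShadowing f ∧ ∃ η > 0, ∀ ε, 0 < ε → ε < η → ∃ δ > 0, ∀ x : ℕ → X,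
    PseudoOrbit f δ x → AsymptoticPseudoOrbit f x →
    ∃! z, ShadowsFrom f ε z x ∧ Tendsto (fun i => dist (f^[i] z) (x i)) atTop (nhds 0)

/-- Unique h-shadowing. -/
def HasUniqueHShadowing (f : X → X) : Prop :=
  ∃ η > 0, ∀ ε, 0 < ε → ε < η → ∃ δ > 0, ∀ (m : ℕ) (x : ℕ → X),
    (∀ i < m, dist (f (x i)) (x (i + 1)) < δ) →
    ∃! z, (∀ i ≤ m, dist (f^[i] z) (x i) < ε) ∧ f^[m] z = x m

/-- Limit shadowing. -/
def HasLimitShadowing (f : X → X) : Prop :=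
  ∀ x : ℕ → X, AsymptoticPseudoOrbit f x →
    ∃ z, Tendsto (fun i => dist (f^[i] z) (x i)) atTop (nhds 0)

/-- Unique limit shadowing. -/
def HasUniqueLimitShadowing (f : X → X) : Prop :=
  ∀ x : ℕ → X, AsymptoticPseudoOrbit f x →
    ∃! z, Tendsto (fun i => dist (f^[i] z) (x i)) atTop (nhds 0)

/-- c-expansivity. -/
def CExpansive (f : X → X) : Prop :=
  ∃ η > 0, ∀ x y : ℤ → X, FullOrbit f x → FullOrbit f y →
    (∀ i, dist (x i) (y i) < η) → x 0 = y 0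

/-- Positive expansivity. -/
def PosExpansive (f : X → X) : Prop :=
  ∃ r > 0, ∀ x : X, {y | ∀ k : ℕ, dist (f^[k] x) (f^[k] y) < r} = {x}

/-- Topological mixing. -/
def Mixing (f : X → X) : Prop :=
  ∀ U V : Set X, IsOpen U → IsOpen V → U.Nonempty → V.Nonempty →
    ∃ N, ∀ n ≥ N, (f^[n] '' U ∩ V).Nonempty


theorem shadowing_implies_twoSidedShadowing
    {X : Type*} [MetricSpace X] [CompactSpace X] (f : X → X) (hf : Continuous f)
    (h : HasShadowing f) : HasTwoSidedShadowing f := by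
  intro ε hε
  obtain ⟨δ, hδ, hsh⟩ := h (ε / 2) (by linarith)
  refine ⟨δ, hδ, fun x hx => ?_⟩
  -- for each n, shadow the forward pseudo-orbit starting at x (-n)
  have key : ∀ n : ℕ, ∃ z, ∀ k : ℕ, dist (f^[k] z) (x ((k : ℤ) - n)) < ε / 2 := by
    intro n
    obtain ⟨z, hz⟩ := hsh (fun k : ℕ => x ((k : ℤ) - n)) (by
      intro i
      have := hx ((i : ℤ) - n)
      have e : ((i : ℤ) - n) + 1 = ((i + 1 : ℕ) : ℤ) - n := by push_cast; ring
      rwa [e] at this)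
    exact ⟨z, hz⟩
  choose z hz using key
  set w : ℕ → (ℤ → X) := fun n i =>
    if h : 0 ≤ i + n then f^[(i + n).toNat] (z n) else x i with hw
  have hw1 : ∀ (n : ℕ) (i : ℤ), 0 ≤ i + (n : ℤ) → dist (w n i) (x i) < ε / 2 := by
    intro n i hi
    have : w n i = f^[(i + n).toNat] (z n) := by simp [hw, hi]
    rw [this]
    have := hz n (i + n).toNat
    have e : (((i + n).toNat : ℤ)) - n = i := by rw [Int.toNat_of_nonneg hi]; ring
    rwa [e] at this
  have hw2 : ∀ (n : ℕ) (i : ℤ), 0 ≤ i + (n : ℤ) → f (w n i) = w n (i + 1) := by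
    intro n i hi
    have hi' : 0 ≤ (i + 1) + n := by linarith
    have e1 : w n i = f^[(i + n).toNat] (z n) := by simp [hw, hi]
    have e2 : w n (i + 1) = f^[((i + 1) + n).toNat] (z n) := by simp [hw, hi']
    rw [e1, e2]
    have e3 : ((i + 1) + n).toNat = (i + n).toNat + 1 := by omega
    rw [e3, Function.iterate_succ_apply']
  -- take an ultrafilter limit
  let U : Ultrafilter ℕ := Ultrafilter.of atTop
  have hUle : (U : Filter ℕ) ≤ atTop := Ultrafilter.of_le _
  obtain ⟨zz, -, hzz⟩ := isCompact_univ.ultrafilter_le_nhds (U.map w) (by simp)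
  have hconv : ∀ i : ℤ, Tendsto (fun n => w n i) U (𝓝 (zz i)) := by
    intro i
    exact (tendsto_pi_nhds.mp hzz) i
  have hev : ∀ i : ℤ, ∀ᶠ n : ℕ in U, 0 ≤ i + n := by
    intro i
    refine hUle (eventually_atTop.mpr ⟨(-i).toNat, fun n hn => ?_⟩)
    omega
  refine ⟨zz, ?_, ?_⟩
  · intro i
    have h1 : Tendsto (fun n => f (w n i)) U (𝓝 (f (zz i))) :=
      (hf.continuousAt.tendsto).comp (hconv i)
    have h2 : Tendsto (fun n => f (w n i)) U (𝓝 (zz (i + 1))) := by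
      refine (hconv (i + 1)).congr' ?_
      filter_upwards [hev i] with n hn
      exact (hw2 n i hn).symm
    exact tendsto_nhds_unique h1 h2
  · intro i
    have h1 : Tendsto (fun n => dist (w n i) (x i)) U (𝓝 (dist (zz i) (x i))) :=
      (continuous_dist.comp ((continuous_id.prodMk continuous_const))).continuousAt.tendsto.comp
        (hconv i)
    have h2 : ∀ᶠ n : ℕ in U, dist (w n i) (x i) ≤ ε / 2 := by
      filter_upwards [hev i] with n hn
      exact (hw1 n i hn).le
    have := le_of_tendsto h1 h2
    linarith
end

section
/- Let (X,f) be a dynamical system on a compact metric space with f surjective. If f has backwards shadowing, then f has shadowing. -/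
open Filter Topology Function

variable {X : Type*} [MetricSpace X]

theorem backwardShadowing_implies_shadowing
    {X : Type*} [MetricSpace X] [CompactSpace X] (f : X → X) (hf : Continuous f)
    (hsurj : Function.Surjective f) (h : HasBackwardShadowing f) : HasShadowing f := by
  intro ε hε
  obtain ⟨δ, hδ, hB⟩ := h (ε / 2) (by linarith)
  refine ⟨δ, hδ, fun x hx => ?_⟩
  set g := surjInv hsurj with hgdef
  have hgf : ∀ y, f (g y) = y := surjInv_eq hsurj
  have key : ∀ N : ℕ, ∃ w : X, ∀ k ≤ N, dist (f^[k] w) (x k) < ε / 2 := by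
    intro N
    set y : ℤ → X := fun i =>
      if -(N : ℤ) ≤ i then x (i + N).toNat else g^[(-(i + N)).toNat] (x 0) with hy
    have hpo : BackwardPseudoOrbit f δ y := by
      intro i hi
      by_cases hiN : -(N : ℤ) ≤ i
      · have h1 : -(N : ℤ) ≤ i + 1 := by omega
        simp only [hy, if_pos hiN, if_pos h1]
        have ht : (i + 1 + N).toNat = (i + N).toNat + 1 := by omega
        rw [ht]
        exact hx _
      · by_cases h1 : -(N : ℤ) ≤ i + 1
        · have ht : (-(i + N)).toNat = 1 := by omega
          have h2 : (i + 1 + N).toNat = 0 := by omega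
          simp only [hy, if_neg hiN, if_pos h1, ht, h2]
          simp [hgf]
          exact hδ
        · have h3 : (-(i + N)).toNat = (-(i + 1 + N)).toNat + 1 := by omega
          simp only [hy, if_neg hiN, if_neg h1, h3]
          rw [Function.iterate_succ_apply', hgf]
          simpa using hδ
    obtain ⟨z, hzo, hzd⟩ := hB y hpo
    have hiter : ∀ (k : ℕ) (i : ℤ), i + k ≤ 0 → f^[k] (z i) = z (i + k) := by
      intro k
      induction k with
      | zero => intro i _; simp
      | succ k ih =>
        intro i hik
        rw [Function.iterate_succ_apply, hzo i (by omega), ih (i + 1) (by omega)]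
        congr 1
        omega
    refine ⟨z (-(N : ℤ)), fun k hk => ?_⟩
    have h1 : f^[k] (z (-(N : ℤ))) = z (-(N : ℤ) + k) := hiter k _ (by omega)
    have h2 : y (-(N : ℤ) + k) = x k := by
      have hp : -(N : ℤ) ≤ -(N : ℤ) + k := by omega
      have ht : (-(N : ℤ) + k + N).toNat = k := by omega
      simp only [hy, if_pos hp, ht]
    have := hzd (-(N : ℤ) + k) (by omega)
    rw [h2] at this
    rw [h1]
    exact this
  choose w hw using key
  obtain ⟨a, -, φ, hφ, hconv⟩ :=
    (isCompact_univ (X := X)).tendsto_subseq (fun n => Set.mem_univ (w n))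
  refine ⟨a, fun k => ?_⟩
  have hcont : Tendsto (fun j => f^[k] (w (φ j))) atTop (𝓝 (f^[k] a)) :=
    ((hf.iterate k).tendsto a).comp hconv
  have hle : dist (f^[k] a) (x k) ≤ ε / 2 := by
    refine le_of_tendsto (hcont.dist tendsto_const_nhds) ?_
    filter_upwards [eventually_ge_atTop k] with j hj
    exact (hw (φ j) k (hj.trans (hφ.le_apply))).le
  linarith
end

section
/- Let (X,f) be a dynamical system on a compact metric space with f surjective. Then f has shadowing if and only if f has two-sided shadowing. -/
open Filter Topology Function

variable {X : Type*} [MetricSpace X]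

theorem shadowing_iff_twoSidedShadowing
    {X : Type*} [MetricSpace X] [CompactSpace X] (f : X → X) (hf : Continuous f)
    (hsurj : Function.Surjective f) : HasShadowing f ↔ HasTwoSidedShadowing f := by
  constructor
  · -- hard direction
    intro hs ε hε
    obtain ⟨δ, hδ, hδs⟩ := hs (ε / 2) (by linarith)
    refine ⟨δ, hδ, fun x hx => ?_⟩
    -- for each n, shadow the forward pseudo-orbit starting at x (-n)
    have key : ∀ n : ℕ, ∃ z, ∀ j : ℕ, dist (f^[j] z) (x ((j : ℤ) - n)) < ε / 2 := by
      intro n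
      apply hδs (fun j => x ((j : ℤ) - n))
      intro j
      have := hx ((j : ℤ) - n)
      have h1 : ((j : ℤ) - n) + 1 = ((j + 1 : ℕ) : ℤ) - n := by push_cast; ring
      rwa [h1] at this
    choose z hz using key
    -- the two-sided approximating sequences
    set w : ℕ → ℤ → X := fun n i => f^[(i + n).toNat] (z n) with hw
    have hwd : ∀ (n : ℕ) (i : ℤ), -(n : ℤ) ≤ i → dist (w n i) (x i) < ε / 2 := by
      intro n i hi
      have h0 : (0 : ℤ) ≤ i + n := by linarith
      have := hz n (i + n).toNat
      rwa [show (((i + n).toNat : ℤ) - n) = i by omega] at this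
    have hwo : ∀ (n : ℕ) (i : ℤ), -(n : ℤ) ≤ i → f (w n i) = w n (i + 1) := by
      intro n i hi
      have h0 : (i + 1 + n).toNat = (i + n).toNat + 1 := by omega
      simp only [hw, h0, Function.iterate_succ', Function.comp_apply]
    -- take an ultrafilter extending atTop
    obtain ⟨U, hU⟩ := Ultrafilter.exists_le (atTop : Filter ℕ)
    have hX : Nonempty X := ⟨x 0⟩
    set L : ℤ → X := fun i => (U.map (fun n => w n i)).lim with hL
    have hLt : ∀ i : ℤ, Tendsto (fun n => w n i) U (𝓝 (L i)) := fun i =>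
      (U.map (fun n => w n i)).le_nhds_lim
    have hev : ∀ i : ℤ, ∀ᶠ n : ℕ in U, -(n : ℤ) ≤ i := by
      intro i
      apply hU
      filter_upwards [Filter.eventually_ge_atTop ((-i).toNat)] with n hn
      omega
    refine ⟨L, ?_, ?_⟩
    · intro i
      have h1 : Tendsto (fun n => f (w n i)) U (𝓝 (f (L i))) :=
        ((hf.tendsto (L i)).comp (hLt i))
      have h2 : Tendsto (fun n => w n (i + 1)) U (𝓝 (f (L i))) := by
        apply h1.congr'
        filter_upwards [hev i] with n hn using hwo n i hn
      exact tendsto_nhds_unique h2 (hLt (i + 1))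
    · intro i
      have h1 : Tendsto (fun n => dist (w n i) (x i)) U (𝓝 (dist (L i) (x i))) :=
        (hLt i).dist tendsto_const_nhds
      have h2 : dist (L i) (x i) ≤ ε / 2 := by
        refine le_of_tendsto h1 ?_
        filter_upwards [hev i] with n hn using le_of_lt (hwd n i hn)
      linarith
  · -- easy direction
    intro hs ε hε
    obtain ⟨δ, hδ, hδs⟩ := hs ε hε
    refine ⟨δ, hδ, fun x hx => ?_⟩
    set g := Function.surjInv hsurj with hg
    have hfg : ∀ y, f (g y) = y := fun y => Function.surjInv_eq hsurj y
    set x' : ℤ → X := fun i => if 0 ≤ i then x i.toNat else g^[(-i).toNat] (x 0) with hx'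
    have hback : ∀ i : ℤ, i < 0 → f (x' i) = x' (i + 1) := by
      intro i hi
      have h1 : x' i = g^[(-i).toNat] (x 0) := by simp [hx', not_le.mpr hi]
      have h2 : (-i).toNat = (-(i + 1)).toNat + 1 := by omega
      rw [h1, h2, Function.iterate_succ', Function.comp_apply, hfg]
      by_cases h3 : i + 1 = 0
      · simp [hx', h3]
      · have h4 : ¬ (0 : ℤ) ≤ i + 1 := by omega
        simp [hx', h4]
    have hpo : TwoSidedPseudoOrbit f δ x' := by
      intro i
      rcases lt_or_ge i 0 with hi | hi
      · rw [hback i hi]; simpa using hδ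
      · have h1 : x' i = x i.toNat := by simp [hx', hi]
        have h2 : x' (i + 1) = x (i.toNat + 1) := by
          have : (0:ℤ) ≤ i + 1 := by omega
          simp only [hx', if_pos this]
          congr 1
          omega
        rw [h1, h2]
        exact hx i.toNat
    obtain ⟨zz, hzz, hzd⟩ := hδs x' hpo
    refine ⟨zz 0, fun i => ?_⟩
    have h1 : f^[i] (zz 0) = zz i := by
      induction i with
      | zero => simp
      | succ k ih =>
        rw [Function.iterate_succ', Function.comp_apply, ih, hzz k]
        norm_cast
    have h2 : x' (i : ℤ) = x i := by simp [hx']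
    rw [h1]
    have := hzd (i : ℤ)
    rwa [h2] at this
end

section
/- If a dynamical system (X,f) on a compact metric space has two-sided s-limit shadowing, then it has backwards s-limit shadowing. -/
open Filter Topology Function

variable {X : Type*} [MetricSpace X]

/-- Extend a backward sequence forward by the genuine orbit of `x 0`. -/
def extOrbit (f : X → X) (x : ℤ → X) : ℤ → X :=
  fun i => if i ≤ 0 then x i else f^[i.toNat] (x 0)

lemma extOrbit_nonpos (f : X → X) (x : ℤ → X) {i : ℤ} (hi : i ≤ 0) :
    extOrbit f x i = x i := if_pos hi

lemma extOrbit_nonneg (f : X → X) (x : ℤ → X) {i : ℤ} (hi : 0 ≤ i) :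
    extOrbit f x i = f^[i.toNat] (x 0) := by
  rcases eq_or_lt_of_le hi with h0 | h0
  · simp [extOrbit, ← h0]
  · exact if_neg (by omega)

lemma extOrbit_step (f : X → X) (x : ℤ → X) {i : ℤ} (hi : 0 ≤ i) :
    f (extOrbit f x i) = extOrbit f x (i + 1) := by
  rw [extOrbit_nonneg f x hi, extOrbit_nonneg f x (by omega : (0:ℤ) ≤ i + 1),
    (by omega : (i + 1).toNat = i.toNat + 1), Function.iterate_succ_apply']

lemma extOrbit_pseudo (f : X → X) {δ : ℝ} (hδ : 0 < δ) (x : ℤ → X)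
    (hx : BackwardPseudoOrbit f δ x) : TwoSidedPseudoOrbit f δ (extOrbit f x) := by
  intro i
  rcases lt_or_ge i 0 with hi | hi
  · rw [extOrbit_nonpos f x hi.le, extOrbit_nonpos f x (by omega : i + 1 ≤ 0)]
    exact hx i hi
  · rw [extOrbit_step f x hi, dist_self]; exact hδ

lemma extOrbit_asymp (f : X → X) (x : ℤ → X) (hx : BackwardAsymptotic f x) :
    TwoSidedAsymptotic f (extOrbit f x) := by
  constructor
  · apply tendsto_const_nhds.congr'
    filter_upwards [eventually_ge_atTop (0 : ℤ)] with i hi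
    rw [extOrbit_step f x hi, dist_self]
  · apply hx.congr'
    filter_upwards [eventually_le_atBot (-1 : ℤ)] with i hi
    rw [extOrbit_nonpos f x (by omega), extOrbit_nonpos f x (by omega : i + 1 ≤ 0)]

theorem twoSidedSLimit_implies_backwardSLimit
    {X : Type*} [MetricSpace X] [CompactSpace X] (f : X → X) (hf : Continuous f)
    (h : HasTwoSidedSLimitShadowing f) : HasBackwardSLimitShadowing f := by
  obtain ⟨hsh, hL⟩ := h
  constructor
  · intro ε hε
    obtain ⟨δ, hδ, hδ'⟩ := hsh ε hε
    refine ⟨δ, hδ, fun x hx => ?_⟩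
    obtain ⟨z, hz, hzx⟩ := hδ' (extOrbit f x) (extOrbit_pseudo f hδ x hx)
    refine ⟨z, fun i _ => hz i, fun i hi => ?_⟩
    rw [← extOrbit_nonpos f x hi]; exact hzx i
  · intro ε hε
    obtain ⟨δ, hδ, hδ'⟩ := hL ε hε
    refine ⟨δ, hδ, fun x hx hax => ?_⟩
    obtain ⟨z, hz, hzx, _, hbot⟩ := hδ' (extOrbit f x) (extOrbit_pseudo f hδ x hx)
      (extOrbit_asymp f x hax)
    refine ⟨z, fun i _ => hz i, fun i hi => ?_, ?_⟩
    · rw [← extOrbit_nonpos f x hi]; exact hzx i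
    · apply hbot.congr'
      filter_upwards [eventually_le_atBot (0 : ℤ)] with i hi
      rw [extOrbit_nonpos f x hi]
end

section
/- If (X,f) is a dynamical system on a compact metric space with f surjective and f has two-sided s-limit shadowing, then f has s-limit shadowing. -/
open Filter Topology Function

variable {X : Type*} [MetricSpace X]

section AuxTSL

variable {X : Type*} [MetricSpace X]

/-- Extension of a forward sequence to a two-sided sequence using a right inverse `g`. -/
noncomputable def extSeq (g : X → X) (x : ℕ → X) : ℤ → X :=
  fun i => if 0 ≤ i then x i.toNat else g^[(-i).toNat] (x 0)

lemma extSeq_ofNat (g : X → X) (x : ℕ → X) (n : ℕ) : extSeq g x (n : ℤ) = x n := by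
  simp [extSeq]

lemma extSeq_backward {f : X → X} (g : X → X) (hg : ∀ a, f (g a) = a)
    (x : ℕ → X) : ∀ i : ℤ, i < 0 → f (extSeq g x i) = extSeq g x (i + 1) := by
  intro i hi
  have hn : (-i).toNat = ((-(i + 1)).toNat) + 1 := by omega
  simp only [extSeq, if_neg (by omega : ¬ (0 : ℤ) ≤ i)]
  rw [hn, Function.iterate_succ_apply', hg]
  rcases le_or_gt 0 (i + 1) with h1 | h1
  · have h0 : i + 1 = 0 := by omega
    rw [h0]
    simp [extSeq]
  · simp [extSeq, if_neg (not_le.mpr h1)]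

lemma extSeq_pseudo {f : X → X} (g : X → X) (hg : ∀ a, f (g a) = a)
    {δ : ℝ} (hδ : 0 < δ) {x : ℕ → X} (hx : PseudoOrbit f δ x) :
    TwoSidedPseudoOrbit f δ (extSeq g x) := by
  intro i
  rcases le_or_gt 0 i with h0 | h0
  · have h1 : (0 : ℤ) ≤ i + 1 := by omega
    have ht : (i + 1).toNat = i.toNat + 1 := by omega
    simp only [extSeq, if_pos h0, if_pos h1, ht]
    exact hx i.toNat
  · rw [extSeq_backward g hg x i h0, dist_self]
    exact hδ

lemma toNat_tendsto_atTop : Tendsto (fun i : ℤ => i.toNat) atTop atTop :=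
  tendsto_atTop_atTop.mpr (fun b => ⟨(b : ℤ), fun i hi => by omega⟩)

lemma extSeq_asymp {f : X → X} (g : X → X) (hg : ∀ a, f (g a) = a)
    {x : ℕ → X} (hx : AsymptoticPseudoOrbit f x) :
    TwoSidedAsymptotic f (extSeq g x) := by
  constructor
  · have h1 : Tendsto (fun i : ℤ => dist (f (x i.toNat)) (x (i.toNat + 1))) atTop (nhds 0) :=
      hx.comp toNat_tendsto_atTop
    refine h1.congr' ?_
    filter_upwards [eventually_ge_atTop (0 : ℤ)] with i hi
    have ht : (i + 1).toNat = i.toNat + 1 := by omega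
    simp [extSeq, if_pos hi, if_pos (by omega : (0 : ℤ) ≤ i + 1), ht]
  · refine tendsto_const_nhds.congr' ?_
    filter_upwards [eventually_le_atBot (-1 : ℤ)] with i hi
    rw [extSeq_backward g hg x i (by omega), dist_self]

lemma fullOrbit_iterate {f : X → X} {z : ℤ → X} (hz : FullOrbit f z) (n : ℕ) :
    z (n : ℤ) = f^[n] (z 0) := by
  induction n with
  | zero => simp
  | succ k ih =>
    have h := hz (k : ℤ)
    have hc : ((k + 1 : ℕ) : ℤ) = (k : ℤ) + 1 := by push_cast; ring
    rw [hc, ← h, ih, Function.iterate_succ_apply']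

end AuxTSL

theorem twoSidedSLimit_implies_sLimit
    {X : Type*} [MetricSpace X] [CompactSpace X] (f : X → X) (hf : Continuous f)
    (hsurj : Function.Surjective f) (h : HasTwoSidedSLimitShadowing f) :
    HasSLimitShadowing f := by
  obtain ⟨hts, hls⟩ := h
  set g := Function.surjInv hsurj with hgdef
  have hg : ∀ a, f (g a) = a := fun a => Function.surjInv_eq hsurj a
  constructor
  · intro ε hε
    obtain ⟨δ, hδ, H⟩ := hts ε hε
    refine ⟨δ, hδ, fun x hx => ?_⟩
    obtain ⟨z, hz, hzx⟩ := H (extSeq g x) (extSeq_pseudo g hg hδ hx)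
    refine ⟨z 0, fun n => ?_⟩
    rw [← fullOrbit_iterate hz n, ← extSeq_ofNat g x n]
    exact hzx (n : ℤ)
  · intro ε hε
    obtain ⟨δ, hδ, H⟩ := hls ε hε
    refine ⟨δ, hδ, fun x hx hax => ?_⟩
    obtain ⟨z, hz, hzx, htt, _⟩ :=
      H (extSeq g x) (extSeq_pseudo g hg hδ hx) (extSeq_asymp g hg hax)
    refine ⟨z 0, fun n => ?_, ?_⟩
    · rw [← fullOrbit_iterate hz n, ← extSeq_ofNat g x n]
      exact hzx (n : ℤ)
    · have hcast : Tendsto (fun n : ℕ => (n : ℤ)) atTop atTop :=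
        tendsto_natCast_atTop_atTop
      have := htt.comp hcast
      refine this.congr fun n => ?_
      simp only [Function.comp]
      rw [fullOrbit_iterate hz n, extSeq_ofNat g x n]
end

section
/- There exists a compact metric dynamical system (X,f) with f not surjective that has two-sided s-limit shadowing and backwards s-limit shadowing but does not have s-limit shadowing. Concretely, X = {−1, −1/2, 0} ∪ {1/2^n : n≥0} ⊂ ℝ with f(−1)=−1/2, f(−1/2)=0, f(0)=0, f(1)=1, f(1/2^n)=1/2^{n−1} for n≥1 is such a system. -/
open Filter Topology Function

variable {X : Type*} [MetricSpace X]

noncomputable abbrev ExampleSpace : Type :=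
  ↥(({-1, -1/2, 0} : Set ℝ) ∪ {x : ℝ | ∃ n : ℕ, x = (1/2) ^ n})

namespace SLE

abbrev XS : Set ℝ := ({-1, -1/2, 0} : Set ℝ) ∪ {x : ℝ | ∃ n : ℕ, x = (1/2) ^ n}

noncomputable def F : ℝ → ℝ := fun x =>
  if x = -1 then -1/2
  else if x = -1/2 then 0
  else if x = 0 then 0
  else if x = 1 then 1
  else 2 * x

lemma mem_cases {x : ℝ} (h : x ∈ XS) :
    x = -1 ∨ x = -1/2 ∨ x = 0 ∨ ∃ n : ℕ, x = (1/2) ^ n := by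
  simpa [XS, Set.mem_union, Set.mem_insert_iff, Set.mem_setOf_eq, or_assoc] using h

lemma pow_mem (n : ℕ) : ((1/2 : ℝ)) ^ n ∈ XS := Or.inr ⟨n, rfl⟩
lemma zero_mem : (0:ℝ) ∈ XS := Or.inl (by simp)
lemma neg1_mem : (-1:ℝ) ∈ XS := Or.inl (by simp)
lemma neghalf_mem : (-1/2:ℝ) ∈ XS := Or.inl (by simp)

lemma F_neg1 : F (-1) = -1/2 := by norm_num [F]
lemma F_neghalf : F (-1/2 : ℝ) = 0 := by norm_num [F]
lemma F_zero : F 0 = 0 := by norm_num [F]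
lemma F_one : F 1 = 1 := by norm_num [F]

lemma F_pow (n : ℕ) : F ((1/2 : ℝ) ^ (n+1)) = (1/2) ^ n := by
  have h1 : (0:ℝ) < (1/2)^(n+1) := by positivity
  have h2 : ((1/2:ℝ))^(n+1) < 1 := by
    apply pow_lt_one₀ (by norm_num) (by norm_num) (Nat.succ_ne_zero n)
  have h3 : F ((1/2:ℝ)^(n+1)) = 2 * (1/2)^(n+1) := by
    simp only [F]
    rw [if_neg (by linarith), if_neg (by linarith), if_neg (by linarith), if_neg (by linarith)]
  rw [h3, pow_succ]; ring

lemma F_mem {x : ℝ} (h : x ∈ XS) : F x ∈ XS := by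
  rcases mem_cases h with h | h | h | ⟨n, rfl⟩
  · rw [h, F_neg1]; exact neghalf_mem
  · rw [h, F_neghalf]; exact zero_mem
  · rw [h, F_zero]; exact zero_mem
  · cases n with
    | zero =>
      rw [pow_zero, F_one]
      have := pow_mem 0; rwa [pow_zero] at this
    | succ m => rw [F_pow]; exact pow_mem m

lemma F_ge_neg_half {x : ℝ} (h : x ∈ XS) : -(1/2) ≤ F x := by
  rcases mem_cases h with rfl | rfl | rfl | ⟨n, rfl⟩
  · rw [F_neg1]; norm_num
  · rw [F_neghalf]; norm_num
  · rw [F_zero]; norm_num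
  · cases n with
    | zero => rw [pow_zero, F_one]; norm_num
    | succ m =>
      rw [F_pow]
      have := pow_pos (show (0:ℝ) < 1/2 by norm_num) m
      linarith

lemma F_nonneg {x : ℝ} (h : x ∈ XS) (hx : x ≠ -1) : 0 ≤ F x := by
  rcases mem_cases h with rfl | rfl | rfl | ⟨n, rfl⟩
  · exact absurd rfl hx
  · rw [F_neghalf]
  · rw [F_zero]
  · cases n with
    | zero => rw [pow_zero, F_one]; norm_num
    | succ m =>
      rw [F_pow]
      have := pow_pos (show (0:ℝ) < 1/2 by norm_num) m
      linarith

lemma F_ge_self {x : ℝ} (h : x ∈ XS) (hx : 0 ≤ x) : x ≤ F x := by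
  rcases mem_cases h with rfl | rfl | rfl | ⟨n, rfl⟩
  · norm_num at hx
  · norm_num at hx
  · rw [F_zero]
  · cases n with
    | zero => rw [pow_zero, F_one]
    | succ m =>
      rw [F_pow]
      have h1 : ((1/2:ℝ))^(m+1) = (1/2)^m * (1/2) := pow_succ _ _
      have := pow_pos (show (0:ℝ) < 1/2 by norm_num) m
      linarith

lemma F_small {x : ℝ} (h : x ∈ XS) (hx : |x| < 1/4) : F x = 2 * x := by
  rcases mem_cases h with rfl | rfl | rfl | ⟨n, rfl⟩
  · exfalso; rw [show |(-1:ℝ)| = 1 by norm_num] at hx; norm_num at hx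
  · exfalso; rw [show |(-1/2:ℝ)| = 1/2 by norm_num] at hx; norm_num at hx
  · rw [F_zero]; ring
  · cases n with
    | zero => rw [pow_zero] at hx ⊢; norm_num at hx
    | succ m =>
      rw [F_pow, pow_succ]
      ring

lemma pow_sep {m n : ℕ} (h : m ≠ n) :
    (1/2:ℝ)^(n+1) ≤ |(1/2:ℝ)^m - (1/2:ℝ)^n| := by
  rcases lt_or_gt_of_ne h with hlt | hlt
  · have h1 : (1/2:ℝ)^n ≤ (1/2:ℝ)^(m+1) :=
      pow_le_pow_of_le_one (by norm_num) (by norm_num) hlt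
    have h2 : (1/2:ℝ)^(n+1) ≤ (1/2:ℝ)^(m+1) :=
      pow_le_pow_of_le_one (by norm_num) (by norm_num) (by omega)
    have h3 : ((1/2:ℝ))^(m+1) + (1/2)^(m+1) = (1/2)^m := by rw [pow_succ]; ring
    have h4 : (1/2:ℝ)^(n+1) ≤ (1/2:ℝ)^m - (1/2:ℝ)^n := by linarith
    exact le_trans h4 (le_abs_self _)
  · have h1 : (1/2:ℝ)^m ≤ (1/2:ℝ)^(n+1) :=
      pow_le_pow_of_le_one (by norm_num) (by norm_num) hlt
    have h3 : ((1/2:ℝ))^(n+1) + (1/2)^(n+1) = (1/2)^n := by rw [pow_succ]; ring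
    have h4 : (1/2:ℝ)^(n+1) ≤ (1/2:ℝ)^n - (1/2:ℝ)^m := by linarith
    calc (1/2:ℝ)^(n+1) ≤ (1/2:ℝ)^n - (1/2:ℝ)^m := h4
      _ ≤ |(1/2:ℝ)^n - (1/2:ℝ)^m| := le_abs_self _
      _ = |(1/2:ℝ)^m - (1/2:ℝ)^n| := abs_sub_comm _ _

lemma isolation {x y : ℝ} (hx : x ∈ XS) (hy : y ∈ XS) (hx0 : x ≠ 0)
    (h : |y - x| < |x| / 2) : y = x := by
  obtain ⟨h1, h2⟩ := abs_lt.mp h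
  rcases mem_cases hx with rfl | rfl | rfl | ⟨n, rfl⟩
  · have hax : |(-1 : ℝ)| = 1 := by norm_num
    rw [hax] at h1 h2
    rcases mem_cases hy with rfl | rfl | rfl | ⟨m, rfl⟩
    · rfl
    · exfalso; norm_num at h2
    · exfalso; norm_num at h2
    · exfalso
      have := pow_pos (show (0:ℝ) < 1/2 by norm_num) m
      linarith
  · have hax : |(-1/2 : ℝ)| = 1/2 := by norm_num
    rw [hax] at h1 h2
    rcases mem_cases hy with rfl | rfl | rfl | ⟨m, rfl⟩
    · exfalso; norm_num at h1
    · rfl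
    · exfalso; norm_num at h2
    · exfalso
      have := pow_pos (show (0:ℝ) < 1/2 by norm_num) m
      linarith
  · exact absurd rfl hx0
  · have hxpos : (0:ℝ) < (1/2)^n := pow_pos (by norm_num) n
    rw [abs_of_pos hxpos] at h1 h2
    rcases mem_cases hy with rfl | rfl | rfl | ⟨m, rfl⟩
    · exfalso; linarith
    · exfalso; linarith
    · exfalso; linarith
    · by_cases hmn : m = n
      · rw [hmn]
      · exfalso
        have hs := pow_sep hmn
        have hps : ((1/2:ℝ))^(n+1) = (1/2)^n * (1/2) := pow_succ _ _
        rw [abs_of_pos hxpos] at h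
        linarith

noncomputable def fE : ExampleSpace → ExampleSpace := fun x => ⟨F x.1, F_mem x.2⟩

lemma fE_val (x : ExampleSpace) : (fE x : ℝ) = F x.1 := rfl

lemma distE (a b : ExampleSpace) : dist a b = |(a:ℝ) - (b:ℝ)| := by
  rw [Subtype.dist_eq, Real.dist_eq]

noncomputable def pp (n : ℕ) : ExampleSpace := ⟨(1/2)^n, pow_mem n⟩
noncomputable def p0 : ExampleSpace := ⟨0, zero_mem⟩
noncomputable def pA : ExampleSpace := ⟨-1, neg1_mem⟩
noncomputable def pB : ExampleSpace := ⟨-1/2, neghalf_mem⟩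

lemma fE_pp (n : ℕ) : fE (pp (n+1)) = pp n := Subtype.ext (F_pow n)
lemma fE_p0 : fE p0 = p0 := Subtype.ext F_zero
lemma fE_pA : fE pA = pB := Subtype.ext F_neg1
lemma fE_pB : fE pB = p0 := Subtype.ext F_neghalf

lemma iter_pA (k : ℕ) : fE^[k+2] pA = p0 := by
  induction k with
  | zero =>
    show fE^[2] pA = p0
    rw [show (2:ℕ) = 1 + 1 from rfl, Function.iterate_succ_apply', Function.iterate_one,
      fE_pA, fE_pB]
  | succ k ih =>
    rw [show k + 1 + 2 = (k + 2) + 1 by ring, Function.iterate_succ_apply', ih, fE_p0]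

lemma iter_pp (k n : ℕ) : fE^[k] (pp (n + k)) = pp n := by
  induction k with
  | zero => rfl
  | succ k ih =>
    rw [Function.iterate_succ_apply, show n + (k+1) = (n+k) + 1 by ring, fE_pp]
    exact ih

lemma fE_cont : Continuous fE := by
  rw [Metric.continuous_iff]
  intro b ε hε
  by_cases hb : (b : ℝ) = 0
  · refine ⟨min (1/4) (ε/2), by positivity, fun a hab => ?_⟩
    rw [distE] at hab ⊢
    have ha4 : |(a:ℝ)| < 1/4 := by
      have h := lt_of_lt_of_le hab (min_le_left _ _)
      rw [hb, sub_zero] at h; exact h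
    have hFa := F_small a.2 ha4
    have hFb : F ((b:ℝ)) = 0 := by rw [hb, F_zero]
    rw [fE_val, fE_val, hFa, hFb, sub_zero, abs_mul]
    have h2 : |(a:ℝ)| < ε/2 := by
      have h := lt_of_lt_of_le hab (min_le_right _ _)
      rw [hb, sub_zero] at h; exact h
    have : |(2:ℝ)| = 2 := by norm_num
    rw [this]; linarith
  · have hbpos : 0 < |(b:ℝ)| := abs_pos.2 hb
    refine ⟨|(b:ℝ)|/2, by linarith, fun a hab => ?_⟩
    have hav : (a:ℝ) = b := by
      apply isolation b.2 a.2 hb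
      rw [distE] at hab; exact hab
    have : a = b := Subtype.ext hav
    rw [this, dist_self]; exact hε

lemma F_ne_neg1 {x : ℝ} (h : x ∈ XS) : F x ≠ -1 := by
  have := F_ge_neg_half h
  intro hc; rw [hc] at this; linarith

lemma fE_not_surj : ¬ Function.Surjective fE := by
  intro hs
  obtain ⟨y, hy⟩ := hs pA
  exact F_ne_neg1 y.2 (congrArg Subtype.val hy)


lemma main_construction (ε : ℝ) (hε : 0 < ε) (x : ℤ → ExampleSpace)
    (hx : TwoSidedPseudoOrbit fE (min ε 1 / 8) x) :
    ∃ z : ℤ → ExampleSpace, FullOrbit fE z ∧ (∀ i, dist (z i) (x i) < ε) ∧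
      ((Tendsto (fun i : ℤ => dist (fE (x i)) (x (i + 1))) atTop (nhds 0)) →
        Tendsto (fun i : ℤ => dist (z i) (x i)) atTop (nhds 0)) ∧
      ((Tendsto (fun i : ℤ => dist (fE (x i)) (x (i + 1))) atBot (nhds 0)) →
        Tendsto (fun i : ℤ => dist (z i) (x i)) atBot (nhds 0)) := by
  set δ : ℝ := min ε 1 / 8 with hδdef
  have hminpos : 0 < min ε 1 := lt_min hε one_pos
  have hδpos : 0 < δ := by rw [hδdef]; linarith
  have hδ8 : δ ≤ 1/8 := by
    rw [hδdef]
    have := min_le_right ε 1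
    linarith
  have h4δ : 4 * δ < ε := by
    rcases le_or_gt ε 1 with h | h
    · have h' : min ε 1 = ε := min_eq_left h
      rw [hδdef, h']; linarith
    · have h' : min ε 1 = 1 := min_eq_right h.le
      rw [hδdef, h']; linarith
  have hjump : ∀ i : ℤ, |F ((x i : ℝ)) - (x (i+1) : ℝ)| < δ := by
    intro i
    have := hx i
    rwa [distE, fE_val] at this
  have hne1 : ∀ i : ℤ, (x i : ℝ) ≠ -1 := by
    intro i hc
    have h1 := hjump (i - 1)
    rw [sub_add_cancel, hc] at h1
    have h2 := F_ge_neg_half (x (i-1)).2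
    rw [abs_of_nonneg (by linarith)] at h1
    linarith
  have hpos : ∀ i : ℤ, 0 ≤ (x i : ℝ) := by
    intro i
    rcases mem_cases (x i).2 with hc | hc | hc | ⟨n, hc⟩
    · exact absurd hc (hne1 i)
    · exfalso
      have h1 := hjump (i-1)
      rw [sub_add_cancel, hc] at h1
      have h2 := F_nonneg (x (i-1)).2 (hne1 (i-1))
      rw [abs_of_nonneg (by linarith)] at h1
      linarith
    · rw [hc]
    · rw [hc]; positivity
  have hforce1 : ∀ i : ℤ, 2*δ ≤ (x (i+1) : ℝ) → x (i+1) = fE (x i) := by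
    intro i hi
    have hne : ((x (i+1)) : ℝ) ≠ 0 := by intro hc; rw [hc] at hi; linarith
    have hiso := isolation (x (i+1)).2 (F_mem (x i).2) hne (by
      rw [abs_of_nonneg (hpos (i+1))]
      have := hjump i
      linarith)
    exact Subtype.ext hiso.symm
  have hforce2 : ∀ i : ℤ, 2*δ ≤ (x i : ℝ) →
      x (i+1) = fE (x i) ∧ 2*δ ≤ ((x (i+1) : ℝ)) := by
    intro i hi
    have hF := F_ge_self (x i).2 (hpos i)
    have hFpos : 2*δ ≤ F ((x i):ℝ) := le_trans hi hF
    have hne : F ((x i):ℝ) ≠ 0 := by intro hc; rw [hc] at hFpos; linarith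
    have heq := isolation (F_mem (x i).2) (x (i+1)).2 hne (by
      rw [abs_of_nonneg (by linarith : (0:ℝ) ≤ F ((x i):ℝ))]
      have := hjump i
      rw [abs_sub_comm] at this
      linarith)
    constructor
    · exact Subtype.ext heq
    · rw [heq]; exact hFpos
  have hupn : ∀ (i : ℤ) (n : ℕ), 2*δ ≤ (x i : ℝ) → 2*δ ≤ (x (i + n) : ℝ) := by
    intro i n hi
    induction n with
    | zero => simpa using hi
    | succ n ih =>
      have h1 := (hforce2 (i + n) ih).2
      have heq : (i + ((n+1 : ℕ) : ℤ)) = (i + n) + 1 := by push_cast; ring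
      rw [heq]; exact h1
  have hup_ge : ∀ i j : ℤ, i ≤ j → 2*δ ≤ (x i : ℝ) → 2*δ ≤ (x j : ℝ) := by
    intro i j hij hi
    have hj : j = i + ((j - i).toNat : ℤ) := by rw [Int.toNat_of_nonneg (by omega)]; ring
    rw [hj]; exact hupn i _ hi
  have growth : ∀ (t : ℝ), 0 < t → ∀ (i : ℤ) (n : ℕ),
      (∀ j : ℤ, i ≤ j → j < i + n →
        ((x j : ℝ) < 1/4 ∧ |F ((x j : ℝ)) - (x (j+1) : ℝ)| < t)) →
      2*t ≤ (x i : ℝ) → 2^n * t + t ≤ (x (i + n) : ℝ) := by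
    intro t ht i n
    induction n with
    | zero =>
      intro _ hi
      have h0 : (i + ((0:ℕ):ℤ)) = i := by simp
      rw [h0]
      norm_num
      linarith
    | succ n ih =>
      intro hcond hi
      have hprev : 2^n * t + t ≤ (x (i+n) : ℝ) := by
        apply ih ?_ hi
        intro j hj1 hj2
        exact hcond j hj1 (by push_cast at hj2 ⊢; omega)
      obtain ⟨hsmall, hjmp⟩ := hcond (i+n) (by omega) (by push_cast; omega)
      have hFeq : F ((x (i+n) : ℝ)) = 2 * (x (i+n) : ℝ) :=
        F_small (x (i+n)).2 (by rw [abs_of_nonneg (hpos _)]; exact hsmall)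
      rw [hFeq] at hjmp
      have habs := abs_lt.mp hjmp
      have hstep : 2 * ((x (i+n)):ℝ) - t < ((x (i+n+1)):ℝ) := by linarith [habs.2]
      have hcast : (i + ((n+1 : ℕ) : ℤ)) = (i + n) + 1 := by push_cast; ring
      rw [hcast]
      have hpow : (2:ℝ)^(n+1) = 2 * 2^n := by ring
      rw [hpow]
      nlinarith [hprev, hstep]
  have decay_bot : ∀ m : ℤ, (∀ i : ℤ, i < m → (x i : ℝ) < 2*δ) →
      Tendsto (fun i : ℤ => dist (fE (x i)) (x (i + 1))) atBot (nhds 0) →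
      Tendsto (fun i : ℤ => (x i : ℝ)) atBot (nhds 0) := by
    intro m hsm hasym
    rw [Metric.tendsto_nhds]
    intro ε' hε'
    set t := min (ε'/3) δ with ht
    have htpos : 0 < t := lt_min (by linarith) hδpos
    have hjt : ∀ᶠ i : ℤ in atBot, dist (fE (x i)) (x (i+1)) < t := by
      have h := Metric.tendsto_nhds.mp hasym t htpos
      filter_upwards [h] with i hi
      rwa [Real.dist_eq, sub_zero, abs_of_nonneg dist_nonneg] at hi
    obtain ⟨N, hN⟩ := eventually_atBot.mp hjt
    obtain ⟨n₀, hn₀⟩ := pow_unbounded_of_one_lt ((1/4) / t) (by norm_num : (1:ℝ) < 2)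
    have hq : (1:ℝ)/4 < 2^n₀ * t := by
      rw [div_lt_iff₀ htpos] at hn₀; linarith
    rw [eventually_atBot]
    refine ⟨min N (m - 2) - n₀, fun i hi => ?_⟩
    have hi1 : i + n₀ ≤ N := by
      have := min_le_left N (m-2); omega
    have hi2 : i + n₀ ≤ m - 2 := by
      have := min_le_right N (m-2); omega
    rw [Real.dist_eq, sub_zero, abs_of_nonneg (hpos i)]
    by_contra hcon
    push_neg at hcon
    have h2t : 2*t ≤ (x i : ℝ) := by
      have := min_le_left (ε'/3) δ
      have ht3 : t ≤ ε'/3 := this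
      linarith
    have hgr := growth t htpos i n₀ ?_ h2t
    · have hxa : (x (i + n₀) : ℝ) < 2*δ := hsm _ (by omega)
      linarith
    · intro j hj1 hj2
      constructor
      · have := hsm j (by omega)
        linarith
      · have hjN : j ≤ N := by omega
        have := hN j hjN
        rwa [distE, fE_val] at this
  have decay_top : (∀ i : ℤ, (x i : ℝ) < 2*δ) →
      Tendsto (fun i : ℤ => dist (fE (x i)) (x (i + 1))) atTop (nhds 0) →
      Tendsto (fun i : ℤ => (x i : ℝ)) atTop (nhds 0) := by
    intro hsm hasym
    rw [Metric.tendsto_nhds]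
    intro ε' hε'
    set t := min (ε'/3) δ with ht
    have htpos : 0 < t := lt_min (by linarith) hδpos
    have hjt : ∀ᶠ i : ℤ in atTop, dist (fE (x i)) (x (i+1)) < t := by
      have h := Metric.tendsto_nhds.mp hasym t htpos
      filter_upwards [h] with i hi
      rwa [Real.dist_eq, sub_zero, abs_of_nonneg dist_nonneg] at hi
    obtain ⟨N, hN⟩ := eventually_atTop.mp hjt
    obtain ⟨n₀, hn₀⟩ := pow_unbounded_of_one_lt ((1/4) / t) (by norm_num : (1:ℝ) < 2)
    have hq : (1:ℝ)/4 < 2^n₀ * t := by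
      rw [div_lt_iff₀ htpos] at hn₀; linarith
    rw [eventually_atTop]
    refine ⟨N, fun i hi => ?_⟩
    rw [Real.dist_eq, sub_zero, abs_of_nonneg (hpos i)]
    by_contra hcon
    push_neg at hcon
    have h2t : 2*t ≤ (x i : ℝ) := by
      have ht3 : t ≤ ε'/3 := min_le_left _ _
      linarith
    have hgr := growth t htpos i n₀ ?_ h2t
    · have hxa : (x (i + n₀) : ℝ) < 2*δ := hsm _
      linarith
    · intro j hj1 hj2
      constructor
      · have := hsm j
        linarith
      · have hjN : N ≤ j := by omega
        have := hN j hjN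
        rwa [distE, fE_val] at this
  by_cases hA : ∀ i : ℤ, (x i : ℝ) < 2*δ
  · refine ⟨fun _ => p0, fun i => fE_p0, ?_, ?_, ?_⟩
    · intro i
      rw [distE]
      have hv : ((p0 : ExampleSpace) : ℝ) = 0 := rfl
      rw [hv, zero_sub, abs_neg, abs_of_nonneg (hpos i)]
      have := hA i
      linarith
    · intro hasym
      have hd := decay_top hA hasym
      have heq : (fun i : ℤ => dist ((fun _ => p0) i) (x i)) = fun i : ℤ => (x i : ℝ) := by
        funext i
        rw [distE]
        have hv : ((p0 : ExampleSpace) : ℝ) = 0 := rfl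
        rw [hv, zero_sub, abs_neg, abs_of_nonneg (hpos i)]
      rw [heq]; exact hd
    · intro hasym
      have hd := decay_bot 0 (fun i _ => hA i) hasym
      have heq : (fun i : ℤ => dist ((fun _ => p0) i) (x i)) = fun i : ℤ => (x i : ℝ) := by
        funext i
        rw [distE]
        have hv : ((p0 : ExampleSpace) : ℝ) = 0 := rfl
        rw [hv, zero_sub, abs_neg, abs_of_nonneg (hpos i)]
      rw [heq]; exact hd
  · push_neg at hA
    obtain ⟨i₀, hi₀⟩ := hA
    by_cases hT : ∀ i : ℤ, 2*δ ≤ (x i : ℝ)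
    · refine ⟨x, fun i => ((hforce2 i (hT i)).1).symm, ?_, ?_, ?_⟩
      · intro i; rw [dist_self]; exact hε
      · intro _; simp only [dist_self]; exact tendsto_const_nhds
      · intro _; simp only [dist_self]; exact tendsto_const_nhds
    · push_neg at hT
      obtain ⟨j₀, hj₀⟩ := hT
      have hTdc : ∀ i : ℤ, (x (i+1) : ℝ) < 2*δ → (x i : ℝ) < 2*δ := by
        intro i h1
        by_contra hc
        push_neg at hc
        have := (hforce2 i hc).2
        linarith
      have hbdd : ∀ i : ℤ, (x i:ℝ) < 2*δ → i ≤ i₀ - 1 := by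
        intro i hi
        by_contra hc
        push_neg at hc
        have := hup_ge i₀ i (by omega) hi₀
        linarith
      obtain ⟨g, hg1, hg2⟩ := Int.exists_greatest_of_bdd ⟨i₀ - 1, hbdd⟩ ⟨j₀, hj₀⟩
      set m : ℤ := g + 1 with hm
      have hxm : 2*δ ≤ (x m : ℝ) := by
        by_contra hc
        push_neg at hc
        have := hg2 m hc
        omega
      have hsm : ∀ i : ℤ, i < m → (x i : ℝ) < 2*δ := by
        intro i him
        have key : ∀ n : ℕ, (x (g - n) : ℝ) < 2*δ := by
          intro n
          induction n with
          | zero => simpa using hg1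
          | succ n ih =>
            apply hTdc
            have h' : g - ((n+1:ℕ):ℤ) + 1 = g - n := by push_cast; ring
            rw [h']; exact ih
        have hieq : i = g - ((g - i).toNat : ℤ) := by rw [Int.toNat_of_nonneg (by omega)]; ring
        rw [hieq]; exact key _
      have hstep : x m = fE (x (m-1)) := by
        have h' := hforce1 (m-1) (by rw [sub_add_cancel]; exact hxm)
        rwa [sub_add_cancel] at h'
      have hsm1 : (x (m-1) : ℝ) < 2*δ := hsm _ (by omega)
      have hF2 : F ((x (m-1)):ℝ) = 2 * ((x (m-1)):ℝ) :=
        F_small (x (m-1)).2 (by rw [abs_of_nonneg (hpos _)]; linarith)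
      have hxm_val : ((x m):ℝ) = 2 * ((x (m-1)):ℝ) := by
        rw [hstep, fE_val]; exact hF2
      have hxm1_pos : 0 < ((x (m-1)):ℝ) := by linarith
      obtain ⟨k, hk⟩ : ∃ k : ℕ, ((x (m-1)):ℝ) = (1/2)^k := by
        rcases mem_cases (x (m-1)).2 with hc|hc|hc|hc
        · exact absurd hc (hne1 _)
        · rw [hc] at hxm1_pos; norm_num at hxm1_pos
        · rw [hc] at hxm1_pos; norm_num at hxm1_pos
        · exact hc
      set w : ℤ → ExampleSpace :=
        fun i => if m - 1 ≤ i then x i else pp (k + (m - 1 - i).toNat) with hw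
      have hweq : ∀ i : ℤ, m - 1 ≤ i → w i = x i := by
        intro i hi; rw [hw]; simp only [if_pos hi]
      have hwval : ∀ i : ℤ, i ≤ m - 1 → ((w i : ℝ)) = (1/2)^(k + (m-1-i).toNat) := by
        intro i hi
        by_cases hc : m - 1 ≤ i
        · have hieq : i = m - 1 := le_antisymm hi hc
          rw [hweq i hc, hieq]
          have h0 : (m - 1 - (m-1)).toNat = 0 := by omega
          rw [h0, Nat.add_zero]
          exact hk
        · rw [hw]; simp only [if_neg hc]; rfl
      have horb : FullOrbit fE w := by
        intro i
        rcases lt_or_ge i (m-1) with hlt | hge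
        · apply Subtype.ext
          rw [fE_val, hwval i (by omega), hwval (i+1) (by omega)]
          have hexp : k + (m-1-i).toNat = (k + (m-1-(i+1)).toNat) + 1 := by omega
          rw [hexp]
          exact F_pow _
        · rw [hweq i hge, hweq (i+1) (by omega)]
          rcases eq_or_lt_of_le hge with heq | hlt2
          · rw [show i = m - 1 by omega, show m - 1 + 1 = m by ring]
            exact hstep.symm
          · exact ((hforce2 i (hup_ge m i (by omega) hxm)).1).symm
      have hdist : ∀ i : ℤ, dist (w i) (x i) < ε := by
        intro i
        rcases le_or_gt (m-1) i with hge | hlt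
        · rw [hweq i hge, dist_self]; exact hε
        · rw [distE, hwval i (by omega)]
          have hb1 : (0:ℝ) < (1/2)^(k + (m-1-i).toNat) := by positivity
          have hb2 : ((1/2:ℝ))^(k + (m-1-i).toNat) ≤ (1/2)^k :=
            pow_le_pow_of_le_one (by norm_num) (by norm_num) (by omega)
          have hb3 : (x i : ℝ) < 2*δ := hsm i (by omega)
          have hb4 : (1/2:ℝ)^k < 2*δ := by rw [← hk]; exact hsm1
          have hxi := hpos i
          rw [abs_lt]
          constructor
          · linarith
          · linarith
      refine ⟨w, horb, hdist, ?_, ?_⟩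
      · intro _
        have hev : ∀ᶠ i : ℤ in atTop, dist (w i) (x i) = 0 := by
          rw [eventually_atTop]
          exact ⟨m - 1, fun i hi => by rw [hweq i hi, dist_self]⟩
        exact Tendsto.congr' (hev.mono fun i hi => hi.symm) tendsto_const_nhds
      · intro hasym
        have hxten := decay_bot m hsm hasym
        have hpten : Tendsto (fun i : ℤ => ((1/2:ℝ))^(k + (m-1-i).toNat)) atBot (nhds 0) := by
          rw [Metric.tendsto_nhds]
          intro ε' hε'
          obtain ⟨n₁, hn₁⟩ : ∃ nn : ℕ, ((1/2:ℝ))^nn < ε' :=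
            exists_pow_lt_of_lt_one hε' (by norm_num)
          rw [eventually_atBot]
          refine ⟨m - 1 - n₁, fun i hi => ?_⟩
          rw [Real.dist_eq, sub_zero, abs_of_nonneg (by positivity)]
          calc ((1/2:ℝ))^(k + (m-1-i).toNat) ≤ (1/2)^n₁ :=
              pow_le_pow_of_le_one (by norm_num) (by norm_num) (by omega)
            _ < ε' := hn₁
        have hsum := hpten.add hxten
        rw [add_zero] at hsum
        apply squeeze_zero' (Eventually.of_forall fun i => dist_nonneg) ?_ hsum
        rw [eventually_atBot]
        refine ⟨m - 1, fun i hi => ?_⟩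
        rw [distE, hwval i hi]
        have hb1 : (0:ℝ) < (1/2)^(k + (m-1-i).toNat) := by positivity
        have := hpos i
        rw [abs_le]
        constructor
        · linarith
        · linarith

lemma delta_pos {ε : ℝ} (hε : 0 < ε) : 0 < min ε 1 / 8 := by
  have := lt_min hε one_pos; linarith

lemma hTwoSided : HasTwoSidedShadowing fE := by
  intro ε hε
  refine ⟨min ε 1 / 8, delta_pos hε, fun x hx => ?_⟩
  obtain ⟨z, h1, h2, _, _⟩ := main_construction ε hε x hx
  exact ⟨z, h1, h2⟩

lemma hL : HasLShadowing fE := by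
  intro ε hε
  refine ⟨min ε 1 / 8, delta_pos hε, fun x hx hasym => ?_⟩
  obtain ⟨z, h1, h2, h3, h4⟩ := main_construction ε hε x hx
  exact ⟨z, h1, h2, h3 hasym.1, h4 hasym.2⟩

lemma backward_ext (ε : ℝ) (hε : 0 < ε) (x : ℤ → ExampleSpace)
    (hx : BackwardPseudoOrbit fE (min ε 1 / 8) x) :
    ∃ z : ℤ → ExampleSpace, BackwardOrbit fE z ∧ (∀ i ≤ (0:ℤ), dist (z i) (x i) < ε) ∧
      (BackwardAsymptotic fE x → Tendsto (fun i : ℤ => dist (z i) (x i)) atBot (nhds 0)) := by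
  set x' : ℤ → ExampleSpace := fun i => if i ≤ 0 then x i else fE^[i.toNat] (x 0) with hx'
  have he : ∀ i : ℤ, i ≤ 0 → x' i = x i := by
    intro i hi; rw [hx']; simp only [if_pos hi]
  have hval : ∀ i : ℤ, 0 ≤ i → x' i = fE^[i.toNat] (x 0) := by
    intro i hi
    rcases eq_or_lt_of_le hi with heq | hgt
    · rw [hx']
      simp only [if_pos (by omega : i ≤ 0)]
      rw [show i = 0 by omega]
      rfl
    · rw [hx']; simp only [if_neg (by omega : ¬ i ≤ 0)]
  have hx'po : TwoSidedPseudoOrbit fE (min ε 1 / 8) x' := by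
    intro i
    rcases lt_or_ge i 0 with hi | hi
    · rw [he i (by omega), he (i+1) (by omega)]
      exact hx i hi
    · have h1 : x' (i+1) = fE (x' i) := by
        rw [hval i hi, hval (i+1) (by omega), show (i+1).toNat = i.toNat + 1 by omega,
          Function.iterate_succ_apply']
      rw [h1, dist_self]
      exact delta_pos hε
  obtain ⟨z, hz1, hz2, _, hz4⟩ := main_construction ε hε x' hx'po
  refine ⟨z, fun i _ => hz1 i, fun i hi => by rw [← he i hi]; exact hz2 i, fun hasym => ?_⟩
  have hasym' : Tendsto (fun i : ℤ => dist (fE (x' i)) (x' (i+1))) atBot (nhds 0) := by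
    apply Tendsto.congr' ?_ hasym
    rw [EventuallyEq, eventually_atBot]
    exact ⟨-1, fun i hi => by rw [he i (by omega), he (i+1) (by omega)]⟩
  have h := hz4 hasym'
  apply Tendsto.congr' ?_ h
  rw [EventuallyEq, eventually_atBot]
  exact ⟨0, fun i hi => by rw [he i hi]⟩

lemma hBackSLimit : HasBackwardSLimitShadowing fE := by
  constructor
  · intro ε hε
    refine ⟨min ε 1 / 8, delta_pos hε, fun x hx => ?_⟩
    obtain ⟨z, h1, h2, _⟩ := backward_ext ε hε x hx
    exact ⟨z, h1, h2⟩
  · intro ε hε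
    refine ⟨min ε 1 / 8, delta_pos hε, fun x hx hasym => ?_⟩
    obtain ⟨z, h1, h2, h3⟩ := backward_ext ε hε x hx
    exact ⟨z, h1, h2, h3 hasym⟩

lemma not_shadowing : ¬ HasShadowing fE := by
  intro h
  obtain ⟨δ, hδ, hsh⟩ := h (1/4) (by norm_num)
  obtain ⟨n, hn⟩ : ∃ n : ℕ, ((1/2:ℝ))^n < δ :=
    exists_pow_lt_of_lt_one hδ (by norm_num)
  set xs : ℕ → ExampleSpace := fun i =>
    if i = 0 then pA else if i = 1 then pB else if i = 2 then p0 else fE^[i - 3] (pp n) with hxs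
  have hx0 : xs 0 = pA := rfl
  have hx1 : xs 1 = pB := rfl
  have hx2 : xs 2 = p0 := rfl
  have hx3 : ∀ k : ℕ, xs (k + 3) = fE^[k] (pp n) := by
    intro k
    rw [hxs]
    simp only [if_neg (by omega : ¬ k + 3 = 0), if_neg (by omega : ¬ k + 3 = 1),
      if_neg (by omega : ¬ k + 3 = 2)]
    rw [show k + 3 - 3 = k by omega]
  have hpo : PseudoOrbit fE δ xs := by
    intro i
    match i with
    | 0 => rw [hx0, hx1, fE_pA, dist_self]; exact hδ
    | 1 => rw [hx1, hx2, fE_pB, dist_self]; exact hδ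
    | 2 =>
      rw [hx2, show (2+1 : ℕ) = 0 + 3 from rfl, hx3 0, fE_p0]
      show dist p0 (pp n) < δ
      rw [distE]
      have h1 : ((p0 : ExampleSpace) : ℝ) = 0 := rfl
      have h2 : ((pp n : ExampleSpace) : ℝ) = (1/2)^n := rfl
      rw [h1, h2, zero_sub, abs_neg, abs_of_nonneg (by positivity)]
      exact hn
    | (k+3) =>
      rw [hx3 k, show k + 3 + 1 = (k+1) + 3 by ring, hx3 (k+1),
        Function.iterate_succ_apply', dist_self]
      exact hδ
  obtain ⟨z, hz⟩ := hsh xs hpo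
  have h0 := hz 0
  rw [Function.iterate_zero_apply, hx0] at h0
  have hzA : z = pA := by
    apply Subtype.ext
    apply isolation neg1_mem z.2 (by norm_num)
    rw [distE] at h0
    have hA : ((pA : ExampleSpace) : ℝ) = -1 := rfl
    rw [hA] at h0
    rw [show |(-1:ℝ)| = 1 by norm_num]
    linarith
  have hlarge := hz (n + 3)
  have h1 : fE^[n+3] z = p0 := by
    rw [hzA, show n + 3 = (n+1) + 2 by ring]
    exact iter_pA (n+1)
  have h2 : xs (n+3) = pp 0 := by
    rw [hx3 n]
    have := iter_pp n 0
    rwa [Nat.zero_add] at this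
  rw [h1, h2, distE] at hlarge
  have hv1 : ((p0 : ExampleSpace) : ℝ) = 0 := rfl
  have hv2 : ((pp 0 : ExampleSpace) : ℝ) = 1 := by
    show ((1:ℝ)/2)^0 = 1
    norm_num
  rw [hv1, hv2] at hlarge
  norm_num at hlarge

lemma not_sLimit : ¬ HasSLimitShadowing fE := fun h => not_shadowing h.1

lemma fE_formula : ∀ x : ExampleSpace, (fE x : ℝ) =
    if (x : ℝ) = -1 then -1/2
    else if (x : ℝ) = -1/2 then 0
    else if (x : ℝ) = 0 then 0
    else if (x : ℝ) = 1 then 1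
    else 2 * (x : ℝ) := fun _ => rfl

end SLE

theorem exists_nonsurjective_twoSided_backward_not_sLimit :
    ∃ f : ExampleSpace → ExampleSpace,
      Continuous f ∧ ¬ Function.Surjective f ∧
      (∀ x : ExampleSpace, (f x : ℝ) =
        if (x : ℝ) = -1 then -1/2
        else if (x : ℝ) = -1/2 then 0
        else if (x : ℝ) = 0 then 0
        else if (x : ℝ) = 1 then 1
        else 2 * (x : ℝ)) ∧
      HasTwoSidedSLimitShadowing f ∧ HasBackwardSLimitShadowing f ∧
      ¬ HasSLimitShadowing f :=
  ⟨SLE.fE, SLE.fE_cont, SLE.fE_not_surj, SLE.fE_formula,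
    ⟨SLE.hTwoSided, SLE.hL⟩, SLE.hBackSLimit, SLE.not_sLimit⟩
end

section
/- Let (X,f) be a dynamical system on a compact metric space. If f is c-expansive, then f has two-sided shadowing if and only if f has two-sided s-limit shadowing. -/
open Filter Topology Function

variable {X : Type*} [MetricSpace X]

/-- Key compactness/expansivity lemma: along any sequence of indices where the
pseudo-orbit errors (in a window around the index) tend to zero, the shadowing
distance tends to zero. -/
lemma key_tendsto {X : Type*} [MetricSpace X] [CompactSpace X] (f : X → X)
    (hf : Continuous f) {η ε' : ℝ}
    (hexp : ∀ x y : ℤ → X, FullOrbit f x → FullOrbit f y →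
      (∀ i, dist (x i) (y i) < η) → x 0 = y 0)
    (hε'η : ε' < η) {x z : ℤ → X} (hz : FullOrbit f z)
    (hd : ∀ i, dist (z i) (x i) ≤ ε') (ψ : ℕ → ℤ)
    (herr : ∀ j : ℤ, Tendsto (fun k => dist (f (x (ψ k + j))) (x (ψ k + j + 1)))
      atTop (nhds 0)) :
    Tendsto (fun k => dist (z (ψ k)) (x (ψ k))) atTop (nhds 0) := by
  apply Filter.tendsto_of_subseq_tendsto
  intro ns hns
  set u : ℕ → (ℤ → X × X) := fun k j => (z (ψ (ns k) + j), x (ψ (ns k) + j)) with hu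
  obtain ⟨p, -, ms, hmono, hlim⟩ := isCompact_univ.tendsto_subseq
    (x := u) (fun k => Set.mem_univ _)
  refine ⟨ms, ?_⟩
  have hpw : ∀ j, Tendsto (fun k => u (ms k) j) atTop (nhds (p j)) := by
    rw [tendsto_pi_nhds] at hlim; exact hlim
  have hv : ∀ j, Tendsto (fun k => z (ψ (ns (ms k)) + j)) atTop (nhds (p j).1) :=
    fun j => (continuous_fst.tendsto _).comp (hpw j)
  have hw : ∀ j, Tendsto (fun k => x (ψ (ns (ms k)) + j)) atTop (nhds (p j).2) :=
    fun j => (continuous_snd.tendsto _).comp (hpw j)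
  have hcomp : Tendsto (fun k => ns (ms k)) atTop atTop :=
    hns.comp hmono.tendsto_atTop
  have hvorb : FullOrbit f (fun j => (p j).1) := by
    intro j
    have h1 : Tendsto (fun k => f (z (ψ (ns (ms k)) + j))) atTop (nhds (f (p j).1)) :=
      (hf.tendsto _).comp (hv j)
    have h2 : (fun k => f (z (ψ (ns (ms k)) + j)))
        = fun k => z (ψ (ns (ms k)) + (j + 1)) := by
      funext k; rw [hz (ψ (ns (ms k)) + j), add_assoc]
    rw [h2] at h1
    exact tendsto_nhds_unique h1 (hv (j + 1))
  have hworb : FullOrbit f (fun j => (p j).2) := by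
    intro j
    have he : Tendsto (fun k => dist (f (x (ψ (ns (ms k)) + j)))
        (x (ψ (ns (ms k)) + j + 1))) atTop (nhds 0) := (herr j).comp hcomp
    have hx1 : Tendsto (fun k => x (ψ (ns (ms k)) + j + 1)) atTop (nhds (p (j + 1)).2) := by
      have := hw (j + 1)
      simpa [← add_assoc] using this
    have hfx : Tendsto (fun k => f (x (ψ (ns (ms k)) + j))) atTop (nhds (p (j + 1)).2) := by
      apply hx1.congr_dist
      simpa [dist_comm] using he
    exact tendsto_nhds_unique ((hf.tendsto _).comp (hw j)) hfx
  have hdlt : ∀ j, dist ((fun j => (p j).1) j) ((fun j => (p j).2) j) < η := by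
    intro j
    have h1 : Tendsto (fun k => dist (z (ψ (ns (ms k)) + j)) (x (ψ (ns (ms k)) + j)))
        atTop (nhds (dist (p j).1 (p j).2)) := (hv j).dist (hw j)
    have h2 : dist (p j).1 (p j).2 ≤ ε' :=
      le_of_tendsto h1 (Filter.Eventually.of_forall fun k => hd _)
    exact lt_of_le_of_lt h2 hε'η
  have h00 : (p 0).1 = (p 0).2 := hexp _ _ hvorb hworb hdlt
  have hfin : Tendsto (fun k => dist (z (ψ (ns (ms k)) + 0)) (x (ψ (ns (ms k)) + 0)))
      atTop (nhds (dist (p 0).1 (p 0).2)) := (hv 0).dist (hw 0)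
  rw [h00, dist_self] at hfin
  simpa [add_zero] using hfin

theorem cExpansive_twoSidedShadowing_iff_twoSidedSLimit
    {X : Type*} [MetricSpace X] [CompactSpace X] (f : X → X) (hf : Continuous f)
    (hexp : CExpansive f) :
    HasTwoSidedShadowing f ↔ HasTwoSidedSLimitShadowing f := by
  constructor
  · intro h
    refine ⟨h, ?_⟩
    obtain ⟨η, hη, hexp⟩ := hexp
    intro ε hε
    set ε' := min ε η / 2 with hε'def
    have hε'pos : 0 < ε' := by
      have := lt_min hε hη; positivity
    have hε'ε : ε' < ε := by
      have h1 : ε' ≤ ε / 2 := by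
        rw [hε'def]; gcongr; exact min_le_left _ _
      linarith
    have hε'η : ε' < η := by
      have h1 : ε' ≤ η / 2 := by
        rw [hε'def]; gcongr; exact min_le_right _ _
      linarith
    obtain ⟨δ, hδ, hsh⟩ := h ε' hε'pos
    refine ⟨δ, hδ, ?_⟩
    rintro x hpo ⟨htop, hbot⟩
    obtain ⟨z, hz, hzd⟩ := hsh x hpo
    have hd : ∀ i, dist (z i) (x i) ≤ ε' := fun i => (hzd i).le
    refine ⟨z, hz, fun i => (hzd i).trans hε'ε, ?_, ?_⟩
    · -- atTop
      rw [Metric.tendsto_nhds]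
      intro β hβ
      by_contra hc
      rw [Filter.not_eventually] at hc
      have hc' : ∀ N : ℤ, ∃ i ≥ N, ¬ dist (dist (z i) (x i)) 0 < β :=
        Filter.frequently_atTop.mp hc
      choose ψ' hψ1 hψ2 using hc'
      set ψ : ℕ → ℤ := fun k => ψ' (k : ℤ) with hψdef
      have hψtop : Tendsto ψ atTop atTop :=
        tendsto_atTop_mono (fun k => hψ1 (k : ℤ)) tendsto_natCast_atTop_atTop
      have herr : ∀ j : ℤ, Tendsto (fun k => dist (f (x (ψ k + j))) (x (ψ k + j + 1)))
          atTop (nhds 0) := by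
        intro j
        exact htop.comp (tendsto_atTop_add_const_right _ j hψtop)
      have hten := key_tendsto f hf hexp hε'η hz hd ψ herr
      obtain ⟨k, hk⟩ := (hten.eventually (eventually_lt_nhds hβ)).exists
      apply hψ2 (k : ℤ)
      rwa [Real.dist_0_eq_abs, abs_of_nonneg dist_nonneg]
    · -- atBot
      rw [Metric.tendsto_nhds]
      intro β hβ
      by_contra hc
      rw [Filter.not_eventually] at hc
      have hc' : ∀ N : ℤ, ∃ i ≤ N, ¬ dist (dist (z i) (x i)) 0 < β :=
        Filter.frequently_atBot.mp hc
      choose ψ' hψ1 hψ2 using hc'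
      set ψ : ℕ → ℤ := fun k => ψ' (-(k : ℤ)) with hψdef
      have hψbot : Tendsto ψ atTop atBot :=
        tendsto_atBot_mono (fun k => hψ1 (-(k : ℤ)))
          (tendsto_neg_atBot_iff.mpr tendsto_natCast_atTop_atTop)
      have herr : ∀ j : ℤ, Tendsto (fun k => dist (f (x (ψ k + j))) (x (ψ k + j + 1)))
          atTop (nhds 0) := by
        intro j
        exact hbot.comp (tendsto_atBot_add_const_right _ j hψbot)
      have hten := key_tendsto f hf hexp hε'η hz hd ψ herr
      obtain ⟨k, hk⟩ := (hten.eventually (eventually_lt_nhds hβ)).exists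
      apply hψ2 (-(k : ℤ))
      rwa [Real.dist_0_eq_abs, abs_of_nonneg dist_nonneg]
  · exact fun h => h.1
end

section
/- Let (X,f) be a dynamical system on a compact metric space with f an expansive surjection. Then the following are equivalent: (1) f has shadowing; (2) f has two-sided shadowing; (3) f has s-limit shadowing; (4) f has two-sided s-limit shadowing. -/
open Filter Topology Function

variable {X : Type*} [MetricSpace X]

section AuxShadowing

lemma cluster_limit {Y : Type*} [TopologicalSpace Y] [CompactSpace Y] (w : ℕ → Y) :
    ∃ y : Y, ∀ s : Set Y, IsClosed s → (∀ᶠ k in atTop, w k ∈ s) → y ∈ s := by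
  obtain ⟨y, hy⟩ := exists_clusterPt_of_compactSpace (Filter.map w atTop)
  refine ⟨y, fun s hs hws => ?_⟩
  have hm : s ∈ Filter.map w atTop := Filter.mem_map.mpr hws
  have := mem_closure_iff_clusterPt.mpr (hy.mono (le_principal_iff.mpr hm))
  rwa [hs.closure_eq] at this

lemma forall_pos_le_zero {a : ℝ} (h : ∀ ρ > 0, a ≤ ρ) : a ≤ 0 := by
  refine le_of_forall_pos_le_add fun ε hε => ?_
  simpa using h ε hε

lemma dist_zero_real {d : ℝ} (h : 0 ≤ d) : dist d 0 = d := by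
  rw [Real.dist_eq, sub_zero, abs_of_nonneg h]

lemma not_tendsto_zero_aux {ι : Type*} {l : Filter ι} {g : ι → ℝ} (hg : ∀ i, 0 ≤ g i)
    (h : ¬ Tendsto g l (nhds 0)) : ∃ ρ > 0, ∃ᶠ i in l, ρ ≤ g i := by
  rw [Metric.tendsto_nhds] at h
  push_neg at h
  obtain ⟨ρ, hρ, hfr⟩ := h
  refine ⟨ρ, hρ, ?_⟩
  simp only [← not_lt] at hfr
  refine hfr.mono fun i hi => ?_
  rw [dist_zero_real (hg i)] at hi
  exact not_lt.mp hi

lemma key_expansive_cluster {X : Type*} [MetricSpace X] [CompactSpace X] {f : X → X}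
    (hf : Continuous f) {η : ℝ}
    (hexp : ∀ x y : ℤ → X, FullOrbit f x → FullOrbit f y →
      (∀ i, dist (x i) (y i) < η) → x 0 = y 0)
    (u v : ℕ → ℤ → X) {ε ρ : ℝ} (hε : ε < η) (hρ : 0 < ρ)
    (h1 : ∀ j : ℤ, ∀ ρ' > 0, ∀ᶠ k in atTop, dist (f (u k j)) (u k (j + 1)) ≤ ρ')
    (h2 : ∀ j : ℤ, ∀ ρ' > 0, ∀ᶠ k in atTop, dist (f (v k j)) (v k (j + 1)) ≤ ρ')
    (h3 : ∀ j : ℤ, ∀ᶠ k in atTop, dist (u k j) (v k j) ≤ ε)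
    (h4 : ∀ᶠ k in atTop, ρ ≤ dist (u k 0) (v k 0)) : False := by
  obtain ⟨p, hp⟩ := cluster_limit (fun k => ((u k, v k) : (ℤ → X) × (ℤ → X)))
  have e1 : ∀ j : ℤ, Continuous (fun q : (ℤ → X) × (ℤ → X) => q.1 j) :=
    fun j => (continuous_apply j).comp continuous_fst
  have e2 : ∀ j : ℤ, Continuous (fun q : (ℤ → X) × (ℤ → X) => q.2 j) :=
    fun j => (continuous_apply j).comp continuous_snd
  have hdle : ∀ (a b : (ℤ → X) × (ℤ → X) → X), Continuous a → Continuous b → ∀ c : ℝ,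
      (∀ᶠ k in atTop, dist (a (u k, v k)) (b (u k, v k)) ≤ c) → dist (a p) (b p) ≤ c :=
    fun a b ha hb c h => hp _ (isClosed_le (ha.dist hb) continuous_const) h
  have hu : FullOrbit f p.1 := by
    intro j
    have : dist (f (p.1 j)) (p.1 (j + 1)) ≤ 0 := by
      refine forall_pos_le_zero fun ρ' hρ' => ?_
      exact hdle (fun q => f (q.1 j)) (fun q => q.1 (j + 1)) (hf.comp (e1 j)) (e1 (j + 1)) ρ'
        (h1 j ρ' hρ')
    exact dist_le_zero.mp this
  have hv : FullOrbit f p.2 := by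
    intro j
    have : dist (f (p.2 j)) (p.2 (j + 1)) ≤ 0 := by
      refine forall_pos_le_zero fun ρ' hρ' => ?_
      exact hdle (fun q => f (q.2 j)) (fun q => q.2 (j + 1)) (hf.comp (e2 j)) (e2 (j + 1)) ρ'
        (h2 j ρ' hρ')
    exact dist_le_zero.mp this
  have hclose : ∀ i, dist (p.1 i) (p.2 i) < η :=
    fun i => lt_of_le_of_lt (hdle _ _ (e1 i) (e2 i) ε (h3 i)) hε
  have h0 := hexp _ _ hu hv hclose
  have : ρ ≤ dist (p.1 0) (p.2 0) :=
    hp {q | ρ ≤ dist (q.1 0) (q.2 0)} (isClosed_le continuous_const ((e1 0).dist (e2 0))) h4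
  rw [h0, dist_self] at this
  linarith

lemma shadowing_twoSided {X : Type*} [MetricSpace X] [CompactSpace X] {f : X → X}
    (hf : Continuous f) (hS : HasShadowing f) : HasTwoSidedShadowing f := by
  intro ε hε
  obtain ⟨δ, hδ, hsh⟩ := hS (ε / 2) (by linarith)
  refine ⟨δ, hδ, fun x hx => ?_⟩
  have hpo : ∀ n : ℕ, PseudoOrbit f δ (fun i => x ((i : ℤ) - n)) := by
    intro n i
    have h := hx ((i : ℤ) - n)
    have e : ((i : ℤ) - n) + 1 = ((i + 1 : ℕ) : ℤ) - n := by push_cast; ring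
    rwa [e] at h
  choose z hz using fun n => hsh _ (hpo n)
  set w : ℕ → ℤ → X := fun n j => f^[(j + (n : ℤ)).toNat] (z n) with hw
  obtain ⟨p, hp⟩ := cluster_limit w
  have hev : ∀ j : ℤ, ∀ᶠ n : ℕ in atTop, 0 ≤ j + (n : ℤ) := by
    intro j
    filter_upwards [eventually_atTop.mpr ⟨(-j).toNat, fun n hn => hn⟩] with n hn
    have h1 : -j ≤ ((-j).toNat : ℤ) := Int.self_le_toNat (-j)
    have h2 : ((-j).toNat : ℤ) ≤ (n : ℤ) := by exact_mod_cast hn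
    omega
  refine ⟨p, ?_, ?_⟩
  · intro j
    refine hp {q | f (q j) = q (j + 1)}
      (isClosed_eq (hf.comp (continuous_apply j)) (continuous_apply (j + 1))) ?_
    filter_upwards [hev j] with n hn
    show f (w n j) = w n (j + 1)
    have e : (j + 1 + (n : ℤ)).toNat = (j + (n : ℤ)).toNat + 1 := by omega
    simp only [hw, e, Function.iterate_succ_apply']
  · intro j
    have hle : dist (p j) (x j) ≤ ε / 2 := by
      refine hp {q | dist (q j) (x j) ≤ ε / 2}
        (isClosed_le ((continuous_apply j).dist continuous_const) continuous_const) ?_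
      filter_upwards [hev j] with n hn
      have h := (hz n) ((j + (n : ℤ)).toNat)
      have e : (((j + (n : ℤ)).toNat : ℤ)) - n = j := by omega
      simp only [e] at h
      exact h.le
    linarith

noncomputable def backExt {X : Type*} (f : X → X) (hsurj : Function.Surjective f) (x0 : X) :
    ℕ → X
  | 0 => x0
  | n + 1 => (hsurj (backExt f hsurj x0 n)).choose

lemma backExt_spec {X : Type*} (f : X → X) (hsurj : Function.Surjective f) (x0 : X) (n : ℕ) :
    f (backExt f hsurj x0 (n + 1)) = backExt f hsurj x0 n :=
  (hsurj (backExt f hsurj x0 n)).choose_spec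

lemma twoSided_shadowing {X : Type*} [MetricSpace X] {f : X → X}
    (hsurj : Function.Surjective f) (hT : HasTwoSidedShadowing f) : HasShadowing f := by
  intro ε hε
  obtain ⟨δ, hδ, hsh⟩ := hT ε hε
  refine ⟨δ, hδ, fun x hx => ?_⟩
  set y : ℤ → X := fun i => if 0 ≤ i then x i.toNat else backExt f hsurj (x 0) (-i).toNat with hy
  have hyp : TwoSidedPseudoOrbit f δ y := by
    intro i
    rcases le_or_gt 0 i with h | h
    · have e1 : y i = x i.toNat := if_pos h
      have e2 : y (i + 1) = x (i.toNat + 1) := by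
        rw [hy]; simp only [if_pos (by omega : (0:ℤ) ≤ i + 1)]
        congr 1; omega
      rw [e1, e2]; exact hx i.toNat
    · have e1 : y i = backExt f hsurj (x 0) (((-i).toNat - 1) + 1) := by
        rw [hy]; simp only [if_neg (not_le.mpr h)]
        congr 1; omega
      have e2 : f (y i) = backExt f hsurj (x 0) ((-i).toNat - 1) := by
        rw [e1]; exact backExt_spec f hsurj (x 0) _
      have e3 : y (i + 1) = backExt f hsurj (x 0) ((-i).toNat - 1) := by
        rcases eq_or_lt_of_le (by omega : i + 1 ≤ 0) with h' | h'
        · rw [hy]; simp only [if_pos (le_of_eq h'.symm)]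
          have h5 : (-i).toNat - 1 = 0 := by omega
          rw [h5]
          have h6 : (i + 1).toNat = 0 := by omega
          rw [h6]; rfl
        · rw [hy]; simp only [if_neg (not_le.mpr h')]
          congr 1; omega
      rw [e2, e3, dist_self]; exact hδ
  obtain ⟨z, hzo, hzd⟩ := hsh y hyp
  refine ⟨z 0, fun i => ?_⟩
  have hit : ∀ i : ℕ, f^[i] (z 0) = z i := by
    intro i
    induction i with
    | zero => rfl
    | succ n ih =>
      have ec : ((n : ℤ) + 1) = ((n + 1 : ℕ) : ℤ) := by norm_cast
      rw [Function.iterate_succ_apply', ih, hzo n, ec]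
  rw [hit i]
  have h := hzd i
  have e : y (i : ℤ) = x i := by simp [hy]
  rwa [e] at h

end AuxShadowing

section AuxShadowing2

variable {X : Type*} [MetricSpace X] [CompactSpace X] {f : X → X}

lemma slimit_clause (hf : Continuous f) {η : ℝ} (hη : 0 < η)
    (hexp : ∀ x y : ℤ → X, FullOrbit f x → FullOrbit f y →
      (∀ i, dist (x i) (y i) < η) → x 0 = y 0)
    (hS : HasShadowing f) :
    ∀ ε > 0, ∃ δ > 0, ∀ x : ℕ → X, PseudoOrbit f δ x → AsymptoticPseudoOrbit f x →
      ∃ z, ShadowsFrom f ε z x ∧ Tendsto (fun i => dist (f^[i] z) (x i)) atTop (nhds 0) := by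
  intro ε hε
  have hmin : 0 < min ε η := lt_min hε hη
  obtain ⟨δ, hδ, hsh⟩ := hS (min ε η / 2) (by linarith)
  refine ⟨δ, hδ, fun x hx hax => ?_⟩
  obtain ⟨z, hz⟩ := hsh x hx
  have hlt : min ε η / 2 < ε := by have := min_le_left ε η; linarith
  have hεη : min ε η / 2 < η := by have := min_le_right ε η; linarith
  refine ⟨z, fun i => (hz i).trans hlt, ?_⟩
  by_contra hnot
  obtain ⟨ρ, hρ, hfr⟩ := not_tendsto_zero_aux (fun i => dist_nonneg) hnot
  obtain ⟨φ, hφm, hφ⟩ := Filter.extraction_of_frequently_atTop hfr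
  have hasy : ∀ ρ' > 0, ∃ M : ℕ, ∀ n ≥ M, dist (f (x n)) (x (n + 1)) ≤ ρ' := by
    intro ρ' hρ'
    have h := Metric.tendsto_nhds.mp hax ρ' hρ'
    rw [eventually_atTop] at h
    obtain ⟨M, hM⟩ := h
    refine ⟨M, fun n hn => ?_⟩
    have := hM n hn
    rw [dist_zero_real dist_nonneg] at this
    exact this.le
  have hbig : ∀ (j : ℤ) (M : ℕ), ∀ᶠ k : ℕ in atTop, (M : ℤ) ≤ (φ k : ℤ) + j := by
    intro j M
    filter_upwards [eventually_atTop.mpr ⟨M + (-j).toNat, fun k hk => hk⟩] with k hk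
    have h1 : k ≤ φ k := hφm.le_apply
    have h2 : -j ≤ ((-j).toNat : ℤ) := Int.self_le_toNat (-j)
    have h3 : ((M + (-j).toNat : ℕ) : ℤ) ≤ (φ k : ℤ) := by exact_mod_cast le_trans hk h1
    push_cast at h3
    omega
  refine key_expansive_cluster hf hexp (fun k j => x (((φ k : ℤ) + j).toNat))
    (fun k j => f^[((φ k : ℤ) + j).toNat] z) hεη hρ ?_ ?_ ?_ ?_
  · intro j ρ' hρ'
    obtain ⟨M, hM⟩ := hasy ρ' hρ'
    filter_upwards [hbig j M] with k hk
    have h0 : (0 : ℤ) ≤ (φ k : ℤ) + j := le_trans (Int.ofNat_nonneg M) hk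
    have e : ((φ k : ℤ) + (j + 1)).toNat = ((φ k : ℤ) + j).toNat + 1 := by omega
    show dist (f (x (((φ k : ℤ) + j).toNat))) (x (((φ k : ℤ) + (j + 1)).toNat)) ≤ ρ'
    rw [e]
    exact hM _ (by omega)
  · intro j ρ' hρ'
    filter_upwards [hbig j 0] with k hk
    have h0 : (0 : ℤ) ≤ (φ k : ℤ) + j := by exact_mod_cast hk
    have e : ((φ k : ℤ) + (j + 1)).toNat = ((φ k : ℤ) + j).toNat + 1 := by omega
    show dist (f (f^[((φ k : ℤ) + j).toNat] z)) (f^[((φ k : ℤ) + (j + 1)).toNat] z) ≤ ρ'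
    rw [e, Function.iterate_succ_apply', dist_self]
    exact hρ'.le
  · intro j
    filter_upwards [hbig j 0] with k hk
    show dist (x (((φ k : ℤ) + j).toNat)) (f^[((φ k : ℤ) + j).toNat] z) ≤ min ε η / 2
    rw [dist_comm]
    exact (hz _).le
  · refine Eventually.of_forall fun k => ?_
    show ρ ≤ dist (x (((φ k : ℤ) + 0).toNat)) (f^[((φ k : ℤ) + 0).toNat] z)
    have e : ((φ k : ℤ) + 0).toNat = φ k := by omega
    rw [e, dist_comm]
    exact hφ k

lemma lshadowing (hf : Continuous f) {η : ℝ} (hη : 0 < η)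
    (hexp : ∀ x y : ℤ → X, FullOrbit f x → FullOrbit f y →
      (∀ i, dist (x i) (y i) < η) → x 0 = y 0)
    (hS : HasShadowing f) : HasLShadowing f := by
  intro ε hε
  have hmin : 0 < min ε η := lt_min hε hη
  obtain ⟨δ, hδ, hsh⟩ := shadowing_twoSided hf hS (min ε η / 2) (by linarith)
  refine ⟨δ, hδ, fun x hx hax => ?_⟩
  obtain ⟨z, hzo, hzd⟩ := hsh x hx
  have hlt : min ε η / 2 < ε := by have := min_le_left ε η; linarith
  have hεη : min ε η / 2 < η := by have := min_le_right ε η; linarith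
  have horb : ∀ (w : ℕ → ℤ), ∀ j : ℤ, ∀ ρ' > (0:ℝ),
      ∀ᶠ k : ℕ in atTop, dist (f (z (w k + j))) (z (w k + (j + 1))) ≤ ρ' := by
    intro w j ρ' hρ'
    refine Eventually.of_forall fun k => ?_
    have e : w k + (j + 1) = (w k + j) + 1 := by ring
    rw [e, ← hzo (w k + j), dist_self]
    exact hρ'.le
  refine ⟨z, hzo, fun i => lt_of_lt_of_le (hzd i) hlt.le, ?_, ?_⟩
  · by_contra hnot
    obtain ⟨ρ, hρ, hfr⟩ := not_tendsto_zero_aux (fun i => dist_nonneg) hnot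
    have hch : ∀ k : ℕ, ∃ b : ℤ, (k : ℤ) ≤ b ∧ ρ ≤ dist (z b) (x b) := by
      intro k
      obtain ⟨b, hb1, hb2⟩ := (frequently_atTop.mp hfr) (k : ℤ)
      exact ⟨b, hb1, hb2⟩
    choose ψ hψ1 hψ2 using hch
    refine key_expansive_cluster hf hexp (fun k j => x (ψ k + j)) (fun k j => z (ψ k + j))
      hεη hρ ?_ (horb ψ) ?_ ?_
    · intro j ρ' hρ'
      have h := Metric.tendsto_nhds.mp hax.1 ρ' hρ'
      rw [eventually_atTop] at h
      obtain ⟨M, hM⟩ := h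
      filter_upwards [eventually_atTop.mpr ⟨(M - j).toNat, fun k hk => hk⟩] with k hk
      have h1 : ((M - j).toNat : ℤ) ≤ (k : ℤ) := by exact_mod_cast hk
      have h2 : M - j ≤ ((M - j).toNat : ℤ) := Int.self_le_toNat _
      have h3 : (k : ℤ) ≤ ψ k := hψ1 k
      have h4 := hM (ψ k + j) (by omega)
      rw [dist_zero_real dist_nonneg] at h4
      have e : ψ k + (j + 1) = ψ k + j + 1 := by ring
      rw [e]
      exact h4.le
    · intro j
      refine Eventually.of_forall fun k => ?_
      rw [dist_comm]
      exact (hzd _).le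
    · refine Eventually.of_forall fun k => ?_
      show ρ ≤ dist (x (ψ k + 0)) (z (ψ k + 0))
      rw [add_zero, dist_comm]
      exact hψ2 k
  · by_contra hnot
    obtain ⟨ρ, hρ, hfr⟩ := not_tendsto_zero_aux (fun i => dist_nonneg) hnot
    have hch : ∀ k : ℕ, ∃ b : ℤ, b ≤ -(k : ℤ) ∧ ρ ≤ dist (z b) (x b) := by
      intro k
      obtain ⟨b, hb1, hb2⟩ := (frequently_atBot.mp hfr) (-(k : ℤ))
      exact ⟨b, hb1, hb2⟩
    choose ψ hψ1 hψ2 using hch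
    refine key_expansive_cluster hf hexp (fun k j => x (ψ k + j)) (fun k j => z (ψ k + j))
      hεη hρ ?_ (horb ψ) ?_ ?_
    · intro j ρ' hρ'
      have h := Metric.tendsto_nhds.mp hax.2 ρ' hρ'
      rw [eventually_atBot] at h
      obtain ⟨M, hM⟩ := h
      filter_upwards [eventually_atTop.mpr ⟨(j - M).toNat, fun k hk => hk⟩] with k hk
      have h1 : ((j - M).toNat : ℤ) ≤ (k : ℤ) := by exact_mod_cast hk
      have h2 : j - M ≤ ((j - M).toNat : ℤ) := Int.self_le_toNat _
      have h3 : ψ k ≤ -(k : ℤ) := hψ1 k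
      have h4 := hM (ψ k + j) (by omega)
      rw [dist_zero_real dist_nonneg] at h4
      have e : ψ k + (j + 1) = ψ k + j + 1 := by ring
      rw [e]
      exact h4.le
    · intro j
      refine Eventually.of_forall fun k => ?_
      rw [dist_comm]
      exact (hzd _).le
    · refine Eventually.of_forall fun k => ?_
      show ρ ≤ dist (x (ψ k + 0)) (z (ψ k + 0))
      rw [add_zero, dist_comm]
      exact hψ2 k

end AuxShadowing2

theorem expansive_surjection_shadowing_equivalences
    {X : Type*} [MetricSpace X] [CompactSpace X] (f : X → X) (hf : Continuous f)
    (hsurj : Function.Surjective f) (hexp : CExpansive f) :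
    (HasShadowing f ↔ HasTwoSidedShadowing f) ∧
    (HasShadowing f ↔ HasSLimitShadowing f) ∧
    (HasShadowing f ↔ HasTwoSidedSLimitShadowing f) := by
  obtain ⟨η, hη, hexpη⟩ := hexp
  have A : HasShadowing f → HasTwoSidedShadowing f := shadowing_twoSided hf
  have B : HasTwoSidedShadowing f → HasShadowing f := twoSided_shadowing hsurj
  have C : HasShadowing f → HasSLimitShadowing f :=
    fun h => ⟨h, slimit_clause hf hη hexpη h⟩
  have E : HasShadowing f → HasLShadowing f := lshadowing hf hη hexpη
  exact ⟨⟨A, B⟩, ⟨C, fun h => h.1⟩,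
    ⟨fun h => ⟨A h, E h⟩, fun h => B h.1⟩⟩
end

section
/- Let (X,f) be a dynamical system on a metric space and n∈ℕ. Then f has n-shadowing if and only if f has shadowing and is positively n-expansive. -/
open Filter Topology Function

variable {X : Type*} [MetricSpace X]

theorem nShadowing_iff_shadowing_and_posNExpansive
    {X : Type*} [MetricSpace X] (f : X → X) (hf : Continuous f) (n : ℕ) (hn : 1 ≤ n) :
    HasNShadowing f n ↔ HasShadowing f ∧ PosNExpansive f n := by
  constructor
  · rintro ⟨η, hη, H⟩
    constructor
    · intro ε hε
      obtain ⟨δ, hδ, hd⟩ := H (min ε (η / 2)) (by positivity)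
        (lt_of_le_of_lt (min_le_right _ _) (by linarith))
      exact ⟨δ, hδ, fun x hx => (hd x hx).1.imp fun z hz i =>
        lt_of_lt_of_le (hz i) (min_le_left _ _)⟩
    · refine ⟨η / 2, by linarith, fun x => ?_⟩
      obtain ⟨δ, hδ, hd⟩ := H (η / 2) (by linarith) (by linarith)
      have hpo : PseudoOrbit f δ (fun i => f^[i] x) := by
        intro i
        simp [PseudoOrbit, ← Function.iterate_succ_apply', hδ]
      obtain ⟨F, hF, hsub⟩ := (hd _ hpo).2
      refine ⟨F, hF, fun y hy => hsub ?_⟩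
      intro k
      simpa [dist_comm] using hy k
  · rintro ⟨hS, r, hr, hE⟩
    refine ⟨r / 2, by linarith, fun ε hε hεr => ?_⟩
    obtain ⟨δ, hδ, hd⟩ := hS ε hε
    refine ⟨δ, hδ, fun x hx => ?_⟩
    obtain ⟨z, hz⟩ := hd x hx
    refine ⟨⟨z, hz⟩, ?_⟩
    obtain ⟨F, hF, hsub⟩ := hE z
    refine ⟨F, hF, fun w hw => hsub ?_⟩
    intro k
    calc dist (f^[k] z) (f^[k] w) ≤ dist (f^[k] z) (x k) + dist (x k) (f^[k] w) :=
          dist_triangle _ _ _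
      _ < ε + ε := add_lt_add (hz k) (by rw [dist_comm]; exact hw k)
      _ < r := by linarith
end

section
/- Let (X,f) be a dynamical system on a metric space and n∈ℕ. Then f has two-sided n-shadowing if and only if f has two-sided shadowing and is n-expansive. -/
open Filter Topology Function

variable {X : Type*} [MetricSpace X]

theorem twoSidedNShadowing_iff_twoSidedShadowing_and_nExpansive
    {X : Type*} [MetricSpace X] (f : X → X) (hf : Continuous f) (n : ℕ) (hn : 1 ≤ n) :
    HasTwoSidedNShadowing f n ↔ HasTwoSidedShadowing f ∧ NExpansive f n := by
  constructor
  · rintro ⟨η, hη, H⟩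
    constructor
    · intro ε hε
      have hε' : 0 < min ε (η / 2) := lt_min hε (by linarith)
      have hε'η : min ε (η / 2) < η := lt_of_le_of_lt (min_le_right _ _) (by linarith)
      obtain ⟨δ, hδ, hsh⟩ := H _ hε' hε'η
      refine ⟨δ, hδ, fun x hx => ?_⟩
      obtain ⟨z, hz, hzd⟩ := (hsh x hx).1
      exact ⟨z, hz, fun i => lt_of_lt_of_le (hzd i) (min_le_left _ _)⟩
    · obtain ⟨δ, hδ, hsh⟩ := H (η / 2) (by linarith) (by linarith)
      refine ⟨η / 2, by linarith, fun x hx => ?_⟩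
      have hpo : TwoSidedPseudoOrbit f δ x := by
        intro i
        rw [hx i]
        simpa using hδ
      obtain ⟨F, hF, hsub⟩ := (hsh x hpo).2
      refine ⟨F, hF, fun y0 hy0 => ?_⟩
      obtain ⟨y, hy, hy0', hyd⟩ := hy0
      exact hsub ⟨y, hy, hy0', fun i => by rw [dist_comm]; exact hyd i⟩
  · rintro ⟨hshad, r, hr, hexp⟩
    refine ⟨r / 2, by linarith, fun ε hε hεr => ?_⟩
    obtain ⟨δ, hδ, hsh⟩ := hshad ε hε
    refine ⟨δ, hδ, fun x hx => ?_⟩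
    obtain ⟨z, hz, hzd⟩ := hsh x hx
    refine ⟨⟨z, hz, hzd⟩, ?_⟩
    obtain ⟨F, hF, hsub⟩ := hexp z hz
    refine ⟨F, hF, fun w0 hw0 => ?_⟩
    obtain ⟨w, hw, hw0, hwd⟩ := hw0
    refine hsub ⟨w, hw, hw0, fun i => ?_⟩
    calc dist (z i) (w i) ≤ dist (z i) (x i) + dist (x i) (w i) := dist_triangle _ _ _
      _ < ε + ε := by
          have := hwd i
          rw [dist_comm] at this
          exact add_lt_add (hzd i) this
      _ < r := by linarith
end

section
/- If a compact metric dynamical system (X,f) has n-shadowing, then it has two-sided n-shadowing. -/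
open Filter Topology Function

variable {X : Type*} [MetricSpace X]

private lemma clusterPt_mem_closed {Y : Type*} [TopologicalSpace Y] {z : Y}
    {F : Filter Y} (hz : ClusterPt z F) {C : Set Y} (hC : IsClosed C) (hmem : C ∈ F) :
    z ∈ C := by
  have : ClusterPt z (𝓟 C) := hz.mono (le_principal_iff.mpr hmem)
  exact hC.closure_eq ▸ mem_closure_iff_clusterPt.mpr this

theorem nShadowing_implies_twoSidedNShadowing
    {X : Type*} [MetricSpace X] [CompactSpace X] (f : X → X) (hf : Continuous f)
    (n : ℕ) (hn : 1 ≤ n) (h : HasNShadowing f n) : HasTwoSidedNShadowing f n := by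
  obtain ⟨η, hη, H⟩ := h
  refine ⟨η, hη, fun ε hε hεη => ?_⟩
  obtain ⟨δ₁, hδ₁, H1⟩ := H (ε/2) (by linarith) (by linarith)
  obtain ⟨δ₂, hδ₂, H2⟩ := H ε hε hεη
  refine ⟨min δ₁ δ₂, lt_min hδ₁ hδ₂, fun x hx => ?_⟩
  constructor
  · -- existence of a full shadowing orbit
    have hw : ∀ m : ℕ, ∃ w, ShadowsFrom f (ε/2) w (fun i : ℕ => x ((i : ℤ) - m)) := by
      intro m
      refine (H1 _ ?_).1
      intro i
      have e : ((i : ℤ) - m) + 1 = ((i + 1 : ℕ) : ℤ) - m := by push_cast; ring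
      calc dist (f (x ((i:ℤ) - m))) (x (((i+1:ℕ):ℤ) - m))
          < min δ₁ δ₂ := by rw [← e]; exact hx ((i : ℤ) - m)
        _ ≤ δ₁ := min_le_left _ _
    choose w hw using hw
    set u : ℕ → ℤ → X := fun m i => f^[(i + m).toNat] (w m) with hu
    have key : ∀ (m : ℕ) (i : ℤ), -(m:ℤ) ≤ i →
        f (u m i) = u m (i + 1) ∧ dist (u m i) (x i) < ε/2 := by
      intro m i hi
      constructor
      · have e : (i + 1 + m).toNat = (i + m).toNat + 1 := by omega
        simp only [hu, e, Function.iterate_succ_apply']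
      · have h1 := hw m (i + m).toNat
        have e : (((i+m).toNat : ℕ) : ℤ) - m = i := by omega
        simp only at h1
        rw [e] at h1
        simp only [hu]
        exact h1
    obtain ⟨z, hz⟩ : ∃ z : ℤ → X, ClusterPt z (Filter.map u atTop) := by
      obtain ⟨z, _, hz⟩ := isCompact_univ.exists_clusterPt
        (f := Filter.map u atTop) (by simp)
      exact ⟨z, hz⟩
    have hz' : ∀ i : ℤ, f (z i) = z (i + 1) ∧ dist (z i) (x i) ≤ ε/2 := by
      intro i
      have hCclosed : IsClosed {v : ℤ → X | f (v i) = v (i+1) ∧ dist (v i) (x i) ≤ ε/2} :=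
        (isClosed_eq (hf.comp (continuous_apply i)) (continuous_apply (i+1))).inter
          (isClosed_le ((continuous_apply i).dist continuous_const) continuous_const)
      refine clusterPt_mem_closed hz hCclosed ?_
      rw [Filter.mem_map]
      have : ∀ᶠ m in atTop, u m ∈
          {v : ℤ → X | f (v i) = v (i+1) ∧ dist (v i) (x i) ≤ ε/2} := by
        filter_upwards [eventually_ge_atTop (-i).toNat] with m hm
        have hmi : -(m:ℤ) ≤ i := by omega
        exact ⟨(key m i hmi).1, (key m i hmi).2.le⟩
      exact this
    exact ⟨z, fun i => (hz' i).1, fun i => lt_of_le_of_lt (hz' i).2 (by linarith)⟩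
  · -- at most n shadowing points
    have hpo : PseudoOrbit f δ₂ (fun i : ℕ => x i) := by
      intro i
      have e : ((i:ℤ)+1) = ((i+1:ℕ):ℤ) := by push_cast; ring
      calc dist (f (x (i:ℤ))) (x ((i+1:ℕ):ℤ))
          < min δ₁ δ₂ := by rw [← e]; exact hx i
        _ ≤ δ₂ := min_le_right _ _
    obtain ⟨F, hF, hsub⟩ := (H2 _ hpo).2
    refine ⟨F, hF, fun z0 hz0 => ?_⟩
    obtain ⟨zz, hfo, rfl, hd⟩ := hz0
    apply hsub
    intro i
    have hit : f^[i] (zz 0) = zz i := by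
      induction i with
      | zero => simp
      | succ k ih =>
        have e2 : ((k+1:ℕ):ℤ) = (k:ℤ)+1 := by push_cast; ring
        rw [e2, Function.iterate_succ_apply', ih, hfo k]
    rw [hit]
    exact hd i
end

section
/- A positively n-expansive continuous map f on a compact metric space is finite-to-one: for every x∈X the preimage f⁻¹(x) is finite. -/
open Filter Topology Function

variable {X : Type*} [MetricSpace X]

theorem posNExpansive_finite_to_one
    {X : Type*} [MetricSpace X] [CompactSpace X] (f : X → X) (hf : Continuous f)
    (n : ℕ) (hn : 1 ≤ n) (h : PosNExpansive f n) :
    ∀ x : X, (f ⁻¹' {x}).Finite := by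
  intro x
  obtain ⟨r, hr, hexp⟩ := h
  by_contra hS
  rw [← Set.not_infinite, not_not] at hS
  -- cover X by finitely many balls of radius r/2
  obtain ⟨t, htfin, hcov⟩ :=
    Metric.totallyBounded_iff.mp (isCompact_univ (X := X)).totallyBounded (r/2) (half_pos hr)
  -- some ball contains infinitely many preimage points
  have hball : ∃ c ∈ t, ((f ⁻¹' {x}) ∩ Metric.ball c (r/2)).Infinite := by
    by_contra hfin
    push_neg at hfin
    apply hS
    have hsub : f ⁻¹' {x} ⊆ ⋃ c ∈ t, (f ⁻¹' {x}) ∩ Metric.ball c (r/2) := by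
      intro y hy
      have hy2 : y ∈ ⋃ c ∈ t, Metric.ball c (r/2) := hcov (Set.mem_univ y)
      simp only [Set.mem_iUnion] at hy2 ⊢
      obtain ⟨c, hc, hyc⟩ := hy2
      exact ⟨c, hc, hy, hyc⟩
    exact Set.Finite.subset (Set.Finite.biUnion htfin hfin) hsub
  obtain ⟨c, -, hinf⟩ := hball
  obtain ⟨z, hz⟩ := hinf.nonempty
  -- all these points belong to the dynamical r-ball around z
  have key : (f ⁻¹' {x}) ∩ Metric.ball c (r/2) ⊆
      {y | ∀ k : ℕ, dist (f^[k] z) (f^[k] y) < r} := by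
    rintro y ⟨hyx, hyc⟩
    intro k
    cases k with
    | zero =>
      simp only [Function.iterate_zero, id_eq]
      calc dist z y ≤ dist z c + dist c y := dist_triangle z c y
        _ < r/2 + r/2 := by
            have h1 : dist z c < r/2 := by
              have := hz.2; rwa [Metric.mem_ball] at this
            have h2 : dist c y < r/2 := by
              rw [dist_comm]; rwa [Metric.mem_ball] at hyc
            exact add_lt_add h1 h2
        _ = r := add_halves r
    | succ m =>
      have hz' : f^[m+1] z = f^[m] x := by
        rw [Function.iterate_succ_apply]
        have : f z = x := hz.1
        rw [this]
      have hy' : f^[m+1] y = f^[m] x := by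
        rw [Function.iterate_succ_apply, hyx]
      rw [hz', hy', dist_self]
      exact hr
  obtain ⟨F, -, hF⟩ := hexp z
  exact hinf (Set.Finite.subset F.finite_toSet (key.trans hF))
end

section
/- If a compact metric dynamical system (X,f) has unique shadowing, then it has unique s-limit shadowing. -/
open Filter Topology Function

variable {X : Type*} [MetricSpace X]

theorem uniqueShadowing_implies_uniqueSLimitShadowing
    {X : Type*} [MetricSpace X] [CompactSpace X] (f : X → X) (hf : Continuous f)
    (h : HasUniqueShadowing f) : HasUniqueSLimitShadowing f := by
  obtain ⟨η, hη, H⟩ := h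
  refine ⟨⟨η, hη, H⟩, η, hη, fun ε hε hεη => ?_⟩
  obtain ⟨δ, hδ, Hδ⟩ := H ε hε hεη
  refine ⟨δ, hδ, fun x hx hax => ?_⟩
  obtain ⟨z, hz, huniq⟩ := Hδ x hx
  have tails : ∀ n, PseudoOrbit f δ (fun i => x (n + i)) := by
    intro n i
    simpa [← Nat.add_assoc] using hx (n + i)
  refine ⟨z, ⟨hz, ?_⟩, fun z' hz' => huniq z' hz'.1⟩
  rw [Metric.tendsto_atTop]
  intro ε' hε'
  set ε'' := min ε' ε / 2 with hε''def
  have hε''pos : 0 < ε'' := by positivity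
  have hε''ε : ε'' < ε := by
    have : min ε' ε ≤ ε := min_le_right _ _
    linarith
  have hε''ε' : ε'' < ε' := by
    have : min ε' ε ≤ ε' := min_le_left _ _
    linarith
  obtain ⟨δ', hδ', Hδ'⟩ := H ε'' hε''pos (hε''ε.trans hεη)
  obtain ⟨N, hN⟩ := Metric.tendsto_atTop.mp hax δ' hδ'
  refine ⟨N, fun n hn => ?_⟩
  have htail' : PseudoOrbit f δ' (fun i => x (n + i)) := by
    intro i
    have h2 := hN (n + i) (le_trans hn (Nat.le_add_right _ _))
    rw [Real.dist_eq, sub_zero, abs_of_nonneg dist_nonneg] at h2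
    simpa [← Nat.add_assoc] using h2
  obtain ⟨w, hw, hwu⟩ := Hδ' _ htail'
  obtain ⟨zt, hzt, hztu⟩ := Hδ _ (tails n)
  have h1 : f^[n] z = zt := by
    refine hztu _ (fun i => ?_)
    have := hz (n + i)
    simpa [← Function.iterate_add_apply, Nat.add_comm] using this
  have h2 : w = zt := hztu _ (fun i => (hw i).trans hε''ε)
  have h3 : dist (f^[n] z) (x n) < ε'' := by
    have := hw 0
    simp only [Function.iterate_zero, id, Nat.add_zero] at this
    rw [h1, ← h2]
    exact this
  rw [Real.dist_eq, sub_zero, abs_of_nonneg dist_nonneg]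
  exact h3.trans hε''ε'
end
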